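/- arXiv:2307.07241 — 5 statements merged into one kernel-verified Lean document; each statement's English description precedes it below -/
import Mathlib

section
/- There exist universal constants c₁ > 0 and c₂ > 0 with the following property: for every integer d ≥ 2, every real m > 1, every offspring distribution μ on {0,1,…,d} with mean m, every n ∈ ℕ and every real x ≥ 0, the normalized Galton–Watson martingale satisfies P(W_n ≥ x) ≤ c₁ · exp(−c₂ · ((m−1)/m) · (x/d)). -/
open MeasureTheory Real Finset ProbabilityTheory
open scoped ENNReal

/-- pointwise exponential bound -/
lemma gw_exp_pt {d : ℕ} {s : ℝ} (k : ℕ) (hk : k ≤ d) (hs0 : 0 ≤ s) (hs1 : s * d ≤ 1) :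
    Real.exp (s * k) ≤ 1 + s * k + 2 * d * s ^ 2 * k := by
  have hk' : (k : ℝ) ≤ d := by exact_mod_cast hk
  have hd0 : (0:ℝ) ≤ d := by positivity
  have hx0 : 0 ≤ s * k := by positivity
  have hx1 : s * k ≤ 1 := by
    calc s * (k:ℝ) ≤ s * d := by nlinarith
    _ ≤ 1 := hs1
  have h := Real.exp_bound' hx0 hx1 (n := 2) (by norm_num)
  have h2 : (∑ m ∈ Finset.range 2, (s*k) ^ m / m.factorial) = 1 + s * k := by
    simp [Finset.sum_range_succ]
  rw [h2] at h
  have h3 : rexp (s * k) ≤ 1 + s * k + (3/4) * (s*k)^2 := by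
    refine h.trans (le_of_eq ?_)
    norm_num [Nat.factorial]
    ring
  refine h3.trans ?_
  have hkc : (0:ℝ) ≤ (k:ℝ) := Nat.cast_nonneg k
  have : (s*(k:ℝ))^2 ≤ s^2 * d * k := by
    nlinarith [mul_nonneg (mul_nonneg (sq_nonneg s) hkc) (sub_nonneg.mpr hk')]
  nlinarith

lemma gw_mgf_real {d : ℕ} {m s : ℝ} (hm : 1 < m) (hs0 : 0 ≤ s) (hs1 : s * d ≤ 1)
    (p : ℕ → ℝ) (hp : ∀ k, 0 ≤ p k)
    (hsum : ∑ k ∈ Finset.range (d+1), p k = 1)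
    (hmean : ∑ k ∈ Finset.range (d+1), (k : ℝ) * p k = m) :
    ∑ k ∈ Finset.range (d+1), Real.exp (s * k) * p k ≤ Real.exp (m * s + 2 * d * m * s ^ 2) := by
  have step : ∑ k ∈ Finset.range (d+1), Real.exp (s * k) * p k
      ≤ ∑ k ∈ Finset.range (d+1), (1 + s * k + 2 * d * s ^ 2 * k) * p k := by
    refine Finset.sum_le_sum fun k hk => ?_
    have hk' : k ≤ d := by
      have := Finset.mem_range.mp hk; omega
    exact mul_le_mul_of_nonneg_right (gw_exp_pt k hk' hs0 hs1) (hp k)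
  refine step.trans ?_
  have expand : ∑ k ∈ Finset.range (d+1), (1 + s * k + 2 * d * s ^ 2 * k) * p k
      = (∑ k ∈ Finset.range (d+1), p k) + s * (∑ k ∈ Finset.range (d+1), (k:ℝ) * p k)
        + 2 * d * s ^ 2 * (∑ k ∈ Finset.range (d+1), (k:ℝ) * p k) := by
    rw [Finset.mul_sum, Finset.mul_sum, ← Finset.sum_add_distrib, ← Finset.sum_add_distrib]
    refine Finset.sum_congr rfl fun k _ => by ring
  rw [expand, hsum, hmean]
  have := Real.add_one_le_exp (m * s + 2 * d * m * s ^ 2)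
  nlinarith

lemma gw_lambda_bound {d : ℕ} {m s : ℝ} (hm : 1 < m) (hs0 : 0 ≤ s) (hs1 : s * d ≤ 1)
    (μ : MeasureTheory.Measure ℕ) (hμ : IsProbabilityMeasure μ)
    (hsupp : ∀ k : ℕ, d < k → μ {k} = 0)
    (hmean : ∑' k : ℕ, (k : ℝ) * (μ {k}).toReal = m) :
    ∑' k : ℕ, ENNReal.ofReal (Real.exp (s * k)) * μ {k}
      ≤ ENNReal.ofReal (Real.exp (m * s + 2 * d * m * s ^ 2)) := by
  set p : ℕ → ℝ := fun k => (μ {k}).toReal with hp_def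
  have htop : ∀ k, μ {k} ≠ ⊤ := fun k => (measure_lt_top μ _).ne
  have hμk : ∀ k, μ {k} = ENNReal.ofReal (p k) := fun k =>
    (ENNReal.ofReal_toReal (htop k)).symm
  have hp0 : ∀ k, 0 ≤ p k := fun k => ENNReal.toReal_nonneg
  have hout : ∀ k ∉ Finset.range (d+1), μ {k} = 0 := by
    intro k hk
    exact hsupp k (by simpa using Finset.mem_range.not.mp hk)
  -- total mass
  have huniv : μ Set.univ = ∑' k : ℕ, μ {k} := by
    rw [← Set.iUnion_of_singleton ℕ]
    exact measure_iUnion (fun i j hij => by simp [Set.disjoint_singleton, hij]) fun _ => measurableSet_singleton _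
  have hsum1 : ∑ k ∈ Finset.range (d+1), p k = 1 := by
    have h1 : ∑' k : ℕ, μ {k} = ∑ k ∈ Finset.range (d+1), μ {k} :=
      tsum_eq_sum (fun k hk => hout k hk)
    have h2 : ∑ k ∈ Finset.range (d+1), μ {k} = 1 := by
      rw [← h1, ← huniv, measure_univ]
    have := congrArg ENNReal.toReal h2
    rw [ENNReal.toReal_sum (fun a _ => htop a)] at this
    simpa using this
  have hmean' : ∑ k ∈ Finset.range (d+1), (k : ℝ) * p k = m := by
    rw [← hmean]
    exact (tsum_eq_sum (fun k hk => by simp [hp_def, hout k hk])).symm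
  have hts : ∑' k : ℕ, ENNReal.ofReal (Real.exp (s * k)) * μ {k}
      = ∑ k ∈ Finset.range (d+1), ENNReal.ofReal (Real.exp (s * k)) * μ {k} :=
    tsum_eq_sum (fun k hk => by simp [hout k hk])
  rw [hts]
  have : ∑ k ∈ Finset.range (d+1), ENNReal.ofReal (Real.exp (s * k)) * μ {k}
      = ENNReal.ofReal (∑ k ∈ Finset.range (d+1), Real.exp (s * k) * p k) := by
    rw [ENNReal.ofReal_sum_of_nonneg (fun k _ => by positivity)]
    refine Finset.sum_congr rfl fun k _ => ?_
    rw [hμk k, ENNReal.ofReal_mul (Real.exp_nonneg _)]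
  rw [this]
  exact ENNReal.ofReal_le_ofReal (gw_mgf_real hm hs0 hs1 p hp0 hsum1 hmean')

lemma gw_arith {m d t u s : ℝ} (hm : 1 < m) (hd : 2 ≤ d) (ht0 : 0 < t)
    (h8dt : 8 * m * d * t = m - 1) (hu0 : 0 < u) (hmu1 : m * u ≤ 1)
    (hs0 : 0 ≤ s) (hsb : s ≤ t * (1 + u) * u) :
    m * s + 2 * d * m * s ^ 2 ≤ t * (1 + m * u) * (m * u) := by
  have hm0 : (0:ℝ) < m := by linarith
  have hu1 : u ≤ 1 := by nlinarith
  have hA : m * s ≤ m * (t * (1 + u) * u) := by nlinarith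
  have hB : s ^ 2 ≤ (t * (1 + u) * u) ^ 2 := by nlinarith
  have hC : 2 * d * m * s ^ 2 ≤ 2 * d * m * (t * (1 + u) * u) ^ 2 := by nlinarith
  have hu2 : (1 + u) ^ 2 ≤ 4 := by nlinarith
  have hD : 2 * d * m * (t * (1 + u) * u) ^ 2 ≤ t * u ^ 2 * (m - 1) := by
    have h1 : 2 * d * m * (t * (1 + u) * u) ^ 2
        = (2 * d * m * t * u ^ 2 * t) * (1 + u) ^ 2 := by ring
    have hpos : (0:ℝ) ≤ 2 * d * m * t * u ^ 2 * t := by positivity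
    have h2 : (2 * d * m * t * u ^ 2 * t) * (1 + u) ^ 2 ≤ (2 * d * m * t * u ^ 2 * t) * 4 :=
      mul_le_mul_of_nonneg_left hu2 hpos
    have h3 : (2 * d * m * t * u ^ 2 * t) * 4 = t * u ^ 2 * (8 * m * d * t) := by ring
    rw [h3, h8dt] at h2
    rw [h1]
    exact h2
  have hE : m * (t * (1 + u) * u) + t * u ^ 2 * (m - 1) ≤ t * (1 + m * u) * (m * u) := by
    nlinarith [mul_nonneg (mul_nonneg ht0.le (sq_nonneg u)) (sq_nonneg (m - 1))]
  linarith [hA, hC.trans hD, hE]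



set_option maxHeartbeats 1000000 in
/-- There exist universal constants c₁ > 0 and c₂ > 0 such that for every integer d ≥ 2,
every real m > 1, every offspring distribution μ on {0,…,d} with mean m, every n ∈ ℕ and
every real x ≥ 0, the normalized Galton–Watson martingale satisfies
P(W_n ≥ x) ≤ c₁ · exp(−c₂ · ((m−1)/m) · (x/d)). -/
theorem gw_tail_Wn_universal :
    ∃ c₁ > (0 : ℝ), ∃ c₂ > (0 : ℝ),
    ∀ (Ω : Type) (_ : MeasurableSpace Ω) (P : MeasureTheory.Measure Ω),
    MeasureTheory.IsProbabilityMeasure P →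
    ∀ (d : ℕ), 2 ≤ d → ∀ (m : ℝ), 1 < m →
    ∀ (μ : MeasureTheory.Measure ℕ), MeasureTheory.IsProbabilityMeasure μ →
    (∀ k : ℕ, d < k → μ {k} = 0) →
    (∑' k : ℕ, (k : ℝ) * (μ {k}).toReal = m) →
    ∀ (ξ : ℕ → ℕ → Ω → ℕ),
    (∀ n i, Measurable (ξ n i)) →
    (∀ n i, MeasureTheory.Measure.map (ξ n i) P = μ) →
    ProbabilityTheory.iIndepFun
      (fun p : ℕ × ℕ => ξ p.1 p.2) P →
    ∀ (Z : ℕ → Ω → ℕ), (∀ ω, Z 0 ω = 1) →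
    (∀ n ω, Z (n + 1) ω = ∑ i ∈ Finset.range (Z n ω), ξ n i ω) →
    ∀ (W : ℕ → Ω → ℝ), (∀ n ω, W n ω = (Z n ω : ℝ) / m ^ n) →
    ∀ (n : ℕ) (x : ℝ), 0 ≤ x →
    P {ω | x ≤ W n ω} ≤
      ENNReal.ofReal (c₁ * Real.exp (-c₂ * ((m - 1) / m) * (x / d))) := by
  refine ⟨Real.exp 1, Real.exp_pos 1, 1/8, by norm_num, ?_⟩
  intro Ω mΩ P hP d hd m hm μ hμ hsupp hmeanμ ξ hξm hξmap hξindep Z hZ0 hZrec W hW n x hx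
  have hdR : (2:ℝ) ≤ (d:ℝ) := by exact_mod_cast hd
  have hd0 : (0:ℝ) < d := by linarith
  have hm0 : (0:ℝ) < m := by linarith
  set t : ℝ := (m - 1) / (8 * m * d) with ht_def
  have ht0 : 0 < t := by
    apply div_pos (by linarith) (by positivity)
  have h8dt : 8 * m * d * t = m - 1 := by
    rw [ht_def]; field_simp
  have htd : 2 * t * d ≤ 1 / 4 := by
    nlinarith [h8dt]
  -- measurable space family
  set mfam : ℕ × ℕ → MeasurableSpace Ω :=
    fun p => MeasurableSpace.comap (ξ p.1 p.2) (inferInstance : MeasurableSpace ℕ) with hmfam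
  have hmfam_le : ∀ p, mfam p ≤ mΩ := fun p => (hξm p.1 p.2).comap_le
  have hiIndep : ProbabilityTheory.iIndep mfam P := hξindep.iIndep
  set G : ℕ → MeasurableSpace Ω := fun k => ⨆ p ∈ {q : ℕ × ℕ | q.1 < k}, mfam p with hG
  set R : ℕ → MeasurableSpace Ω := fun k => ⨆ p ∈ {q : ℕ × ℕ | q.1 = k}, mfam p with hR
  have hGle : ∀ k, G k ≤ mΩ := fun k => iSup₂_le fun p _ => hmfam_le p
  have hRle : ∀ k, R k ≤ mΩ := fun k => iSup₂_le fun p _ => hmfam_le p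
  have hGmono : ∀ {a b : ℕ}, a ≤ b → G a ≤ G b := by
    intro a b hab
    exact biSup_mono fun p hp => lt_of_lt_of_le hp hab
  have hξR : ∀ k i, Measurable[R k] (ξ k i) := by
    intro k i
    exact (Measurable.of_comap_le le_rfl).mono (le_biSup mfam (show (k,i) ∈ {q : ℕ × ℕ | q.1 = k} from rfl)) le_rfl
  have hξG : ∀ k i j, k < j → Measurable[G j] (ξ k i) := by
    intro k i j hkj
    exact (Measurable.of_comap_le le_rfl).mono (le_biSup mfam (show (k,i) ∈ {q : ℕ × ℕ | q.1 < j} from hkj)) le_rfl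
  have hIndepGR : ∀ k, ProbabilityTheory.Indep (G k) (R k) P := by
    intro k
    refine indep_iSup_of_disjoint hmfam_le hiIndep ?_
    rw [Set.disjoint_left]
    intro p hp hp'
    simp only [Set.mem_setOf_eq] at hp hp'
    omega
  -- measurability of Z
  have hZG : ∀ k, Measurable[G k] (Z k) := by
    intro k
    induction k with
    | zero =>
      have : Z 0 = fun _ => 1 := funext hZ0
      rw [this]; exact measurable_const
    | succ k ih =>
      have hsum : ∀ w : ℕ, Measurable[G (k+1)] (fun ω => ∑ i ∈ Finset.range w, ξ k i ω) :=
        fun w => Finset.measurable_sum _ (fun i _ => hξG k i (k+1) (Nat.lt_succ_self k))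
      refine @measurable_to_countable' ℕ Ω _ _ (G (k+1)) (Z (k+1)) fun z => ?_
      have hset : Z (k+1) ⁻¹' {z}
          = ⋃ w : ℕ, (Z k ⁻¹' {w} ∩ (fun ω => ∑ i ∈ Finset.range w, ξ k i ω) ⁻¹' {z}) := by
        ext ω
        simp only [Set.mem_preimage, Set.mem_singleton_iff, Set.mem_iUnion, Set.mem_inter_iff,
          hZrec k ω]
        exact ⟨fun h => ⟨Z k ω, rfl, h⟩, fun ⟨w, hw, h⟩ => by rw [hw]; exact h⟩
      rw [hset]
      exact MeasurableSet.iUnion fun w =>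
        ((hGmono (Nat.le_succ k)) _ (ih (measurableSet_singleton w))).inter
          ((hsum w) (measurableSet_singleton z))
  have hZmeas : ∀ k, Measurable (Z k) := fun k => (hZG k).mono (hGle k) le_rfl
  -- partition identity
  have hpart : ∀ (k : ℕ) (f : ℕ → ℝ≥0∞),
      ∫⁻ ω, f (Z k ω) ∂P = ∑' z : ℕ, f z * P (Z k ⁻¹' {z}) := by
    intro k f
    rw [← lintegral_map measurable_from_top (hZmeas k), lintegral_countable']
    exact tsum_congr fun z => by rw [Measure.map_apply (hZmeas k) (measurableSet_singleton z)]
  -- row factorization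
  have hrow : ∀ (k z : ℕ) (g : ℕ → ℝ≥0∞),
      ∫⁻ ω, ∏ i ∈ Finset.range z, g (ξ k i ω) ∂P
        = ∏ i ∈ Finset.range z, ∫⁻ ω, g (ξ k i ω) ∂P := by
    intro k z g
    induction z with
    | zero => simp
    | succ z ih =>
      have hfam : iIndepFun
          (fun p : ℕ×ℕ => g ∘ (fun ω => ξ p.1 p.2 ω)) P :=
        hξindep.comp (fun _ => g) (fun _ => measurable_from_top)
      have hmeasf : ∀ p : ℕ×ℕ, Measurable (g ∘ (fun ω => ξ p.1 p.2 ω)) :=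
        fun p => measurable_from_top.comp (hξm p.1 p.2)
      have hnotmem : (k, z) ∉ (Finset.range z).image (fun i => (k, i)) := by simp
      have hindep := hfam.indepFun_finsetProd_of_notMem hmeasf hnotmem
      have hfun : (∏ p ∈ (Finset.range z).image (fun i : ℕ => (k, i)),
            (g ∘ fun ω => ξ p.1 p.2 ω))
          = fun ω => ∏ i ∈ Finset.range z, g (ξ k i ω) := by
        funext ω
        rw [Finset.prod_apply, Finset.prod_image (by intro a _ b _ h; simpa using h)]
        rfl
      rw [hfun] at hindep
      simp only [Finset.prod_range_succ]
      rw [← ih]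
      have := lintegral_mul_eq_lintegral_mul_lintegral_of_indepFun (μ := P)
          (f := fun ω => ∏ i ∈ Finset.range z, g (ξ k i ω)) (g := fun ω => g (ξ k z ω))
          (Finset.measurable_prod _ fun i _ => measurable_from_top.comp (hξm k i))
          (measurable_from_top.comp (hξm k z)) hindep
      simpa using this
  -- one-ξ mgf value
  have hΛval : ∀ (s : ℝ) (k i : ℕ),
      ∫⁻ ω, ENNReal.ofReal (Real.exp (s * (ξ k i ω : ℝ))) ∂P
        = ∑' j : ℕ, ENNReal.ofReal (Real.exp (s * (j : ℝ))) * μ {j} := by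
    intro s k i
    have h1 : ∫⁻ ω, ENNReal.ofReal (Real.exp (s * (ξ k i ω : ℝ))) ∂P
        = ∫⁻ j, ENNReal.ofReal (Real.exp (s * (j : ℝ))) ∂(P.map (ξ k i)) :=
      (lintegral_map (f := fun j : ℕ => ENNReal.ofReal (Real.exp (s * (j : ℝ))))
        measurable_from_top (hξm k i)).symm
    rw [h1, hξmap k i, lintegral_countable']
  -- the one-generation step
  have hstep : ∀ (k : ℕ) (s : ℝ), 0 ≤ s → s * d ≤ 1 →
      ∫⁻ ω, ENNReal.ofReal (Real.exp (s * (Z (k+1) ω : ℝ))) ∂P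
        ≤ ∫⁻ ω, ENNReal.ofReal (Real.exp ((m * s + 2 * d * m * s ^ 2) * (Z k ω : ℝ))) ∂P := by
    intro k s hs0 hs1
    set g : ℕ → ℝ≥0∞ := fun j => ENNReal.ofReal (Real.exp (s * (j : ℝ))) with hg
    set Λ : ℝ≥0∞ := ∑' j : ℕ, ENNReal.ofReal (Real.exp (s * (j : ℝ))) * μ {j} with hL
    have hΛle : Λ ≤ ENNReal.ofReal (Real.exp (m * s + 2 * d * m * s ^ 2)) :=
      gw_lambda_bound hm hs0 hs1 μ hμ hsupp hmeanμ
    have hprodform : ∀ ω, ENNReal.ofReal (Real.exp (s * (Z (k+1) ω : ℝ)))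
        = ∏ i ∈ Finset.range (Z k ω), g (ξ k i ω) := by
      intro ω
      rw [hZrec k ω]
      rw [Nat.cast_sum, Finset.mul_sum, Real.exp_sum,
        ENNReal.ofReal_prod_of_nonneg (fun i _ => Real.exp_nonneg _)]
    have hmeasset : ∀ z : ℕ, MeasurableSet (Z k ⁻¹' {z}) :=
      fun z => hZmeas k (measurableSet_singleton z)
    have hcover : (⋃ z : ℕ, Z k ⁻¹' {z}) = Set.univ := by ext ω; simp
    have hdisj : Pairwise (Function.onFun Disjoint fun z : ℕ => Z k ⁻¹' {z}) :=
      fun a b hab => (Set.disjoint_singleton.mpr hab).preimage _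
    have hsplit : ∫⁻ ω, ENNReal.ofReal (Real.exp (s * (Z (k+1) ω : ℝ))) ∂P
        = ∑' z : ℕ, ∫⁻ ω in Z k ⁻¹' {z}, ENNReal.ofReal (Real.exp (s * (Z (k+1) ω : ℝ))) ∂P := by
      conv_lhs => rw [← setLIntegral_univ, ← hcover]
      rw [lintegral_iUnion hmeasset hdisj]
    have hpiece : ∀ z : ℕ, ∫⁻ ω in Z k ⁻¹' {z},
          ENNReal.ofReal (Real.exp (s * (Z (k+1) ω : ℝ))) ∂P
        = P (Z k ⁻¹' {z}) * Λ ^ z := by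
      intro z
      have h1 : ∫⁻ ω in Z k ⁻¹' {z}, ENNReal.ofReal (Real.exp (s * (Z (k+1) ω : ℝ))) ∂P
          = ∫⁻ ω in Z k ⁻¹' {z}, ∏ i ∈ Finset.range z, g (ξ k i ω) ∂P := by
        refine setLIntegral_congr_fun (hmeasset z) (fun ω hω => ?_)
        rw [hprodform ω]
        have hzz : Z k ω = z := hω
        rw [hzz]
      have h2 : ∫⁻ ω in Z k ⁻¹' {z}, ∏ i ∈ Finset.range z, g (ξ k i ω) ∂P
          = ∫⁻ ω, (Z k ⁻¹' {z}).indicator (fun _ => (1 : ℝ≥0∞)) ω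
              * ∏ i ∈ Finset.range z, g (ξ k i ω) ∂P := by
        rw [← lintegral_indicator (hmeasset z)]
        congr 1; funext ω
        by_cases hω : ω ∈ Z k ⁻¹' {z} <;> simp [Set.indicator, hω]
      have hmf : Measurable[G k] ((Z k ⁻¹' {z}).indicator (fun _ => (1 : ℝ≥0∞))) :=
        measurable_const.indicator ((hZG k) (measurableSet_singleton z))
      have hmg : Measurable[R k] (fun ω => ∏ i ∈ Finset.range z, g (ξ k i ω)) :=
        Finset.measurable_prod _ fun i _ => (measurable_from_top (f := g)).comp (hξR k i)
      rw [h1, h2,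
        ProbabilityTheory.lintegral_mul_eq_lintegral_mul_lintegral_of_independent_measurableSpace
          (hGle k) (hRle k) (hIndepGR k) hmf hmg,
        lintegral_indicator_const (hmeasset z) 1, one_mul, hrow k z g]
      congr 1
      rw [Finset.prod_congr rfl (fun i _ => hΛval s k i), Finset.prod_const, Finset.card_range]
    rw [hsplit]
    calc ∑' z : ℕ, ∫⁻ ω in Z k ⁻¹' {z}, ENNReal.ofReal (Real.exp (s * (Z (k+1) ω : ℝ))) ∂P
        = ∑' z : ℕ, P (Z k ⁻¹' {z}) * Λ ^ z := tsum_congr hpiece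
      _ ≤ ∑' z : ℕ, ENNReal.ofReal (Real.exp ((m * s + 2 * d * m * s ^ 2) * (z : ℝ)))
            * P (Z k ⁻¹' {z}) := by
          refine Summable.tsum_le_tsum (fun z => ?_) ENNReal.summable ENNReal.summable
          rw [mul_comm]
          refine mul_le_mul_left ?_ _
          calc Λ ^ z ≤ (ENNReal.ofReal (Real.exp (m * s + 2 * d * m * s ^ 2))) ^ z :=
                pow_le_pow_left' hΛle z
            _ = ENNReal.ofReal ((Real.exp (m * s + 2 * d * m * s ^ 2)) ^ z) :=
                (ENNReal.ofReal_pow (Real.exp_nonneg _) z).symm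
            _ = ENNReal.ofReal (Real.exp ((m * s + 2 * d * m * s ^ 2) * (z : ℝ))) := by
                rw [mul_comm (m * s + 2 * d * m * s ^ 2) (z : ℝ), Real.exp_nat_mul]
      _ = ∫⁻ ω, ENNReal.ofReal (Real.exp ((m * s + 2 * d * m * s ^ 2) * (Z k ω : ℝ))) ∂P :=
          (hpart k (fun z => ENNReal.ofReal (Real.exp ((m * s + 2 * d * m * s ^ 2) * (z : ℝ))))).symm
  -- main uniform mgf bound
  have hmain : ∀ (k : ℕ) (s : ℝ), 0 ≤ s → s ≤ t * (1 + (1/m) ^ k) * (1/m) ^ k →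
      ∫⁻ ω, ENNReal.ofReal (Real.exp (s * (Z k ω : ℝ))) ∂P
        ≤ ENNReal.ofReal (Real.exp (2 * t)) := by
    intro k
    induction k with
    | zero =>
      intro s hs0 hsb
      simp only [pow_zero, mul_one] at hsb
      have hconst : (fun ω => ENNReal.ofReal (Real.exp (s * (Z 0 ω : ℝ))))
          = fun _ => ENNReal.ofReal (Real.exp s) := by
        funext ω; rw [hZ0 ω]; norm_num
      rw [hconst, lintegral_const, measure_univ, mul_one]
      exact ENNReal.ofReal_le_ofReal (Real.exp_le_exp.mpr (by nlinarith))
    | succ k ih =>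
      intro s hs0 hsb
      set u : ℝ := (1/m) ^ (k+1) with hu_def
      have hu0 : (0:ℝ) < u := by positivity
      have hmu : m * u = (1/m) ^ k := by
        rw [hu_def, pow_succ]
        field_simp
      have hmu1 : m * u ≤ 1 := by
        rw [hmu]
        exact pow_le_one₀ (by positivity) (by rw [div_le_one hm0]; linarith)
      have hu1 : u ≤ 1 := by nlinarith
      have htu : t * (1 + u) * u ≤ 2 * t := by
        nlinarith [mul_nonneg ht0.le hu0.le,
          mul_le_mul_of_nonneg_left hu1 (mul_nonneg ht0.le hu0.le)]
      have hs2t : s ≤ 2 * t := hsb.trans htu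
      have hsd : s * d ≤ 1 := by
        nlinarith [mul_le_mul_of_nonneg_right hs2t hd0.le]
      refine (hstep k s hs0 hsd).trans (ih (m * s + 2 * d * m * s ^ 2) (by positivity) ?_)
      rw [← hmu]
      exact gw_arith hm hdR ht0 h8dt hu0 hmu1 hs0 hsb
  -- Chernoff
  set s : ℝ := t * (1/m) ^ n with hs_def
  have hr0 : (0:ℝ) < (1/m) ^ n := by positivity
  have hr1 : (1/m) ^ n ≤ 1 := pow_le_one₀ (by positivity) (by rw [div_le_one hm0]; linarith)
  have hs0 : 0 ≤ s := by positivity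
  have hsb : s ≤ t * (1 + (1/m) ^ n) * (1/m) ^ n := by nlinarith
  have hbound := hmain n s hs0 hsb
  have hgmeas : Measurable (fun ω => ENNReal.ofReal (Real.exp (s * (Z n ω : ℝ)))) :=
    (measurable_from_top (f := fun z : ℕ => ENNReal.ofReal (Real.exp (s * (z : ℝ))))).comp
      (hZmeas n)
  have hkey : ENNReal.ofReal (Real.exp (t * x)) * P {ω | x ≤ W n ω}
      ≤ ENNReal.ofReal (Real.exp (2 * t)) := by
    calc ENNReal.ofReal (Real.exp (t * x)) * P {ω | x ≤ W n ω}
        = ∫⁻ _ω in {ω | x ≤ W n ω}, ENNReal.ofReal (Real.exp (t * x)) ∂P :=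
          (setLIntegral_const _ _).symm
      _ ≤ ∫⁻ ω in {ω | x ≤ W n ω}, ENNReal.ofReal (Real.exp (s * (Z n ω : ℝ))) ∂P := by
          refine setLIntegral_mono hgmeas fun ω hω => ?_
          apply ENNReal.ofReal_le_ofReal
          apply Real.exp_le_exp.mpr
          have hWn : W n ω = (Z n ω : ℝ) / m ^ n := hW n ω
          have hsz : s * (Z n ω : ℝ) = t * W n ω := by
            rw [hWn, hs_def, one_div, inv_pow]
            field_simp
          rw [hsz]
          have hxW : x ≤ W n ω := hω
          nlinarith
      _ ≤ ∫⁻ ω, ENNReal.ofReal (Real.exp (s * (Z n ω : ℝ))) ∂P :=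
          setLIntegral_le_lintegral _ _
      _ ≤ ENNReal.ofReal (Real.exp (2 * t)) := hbound
  have hdiv : P {ω | x ≤ W n ω}
      ≤ ENNReal.ofReal (Real.exp (2 * t)) / ENNReal.ofReal (Real.exp (t * x)) := by
    rw [ENNReal.le_div_iff_mul_le
      (Or.inl (ENNReal.ofReal_pos.mpr (Real.exp_pos _)).ne')
      (Or.inl ENNReal.ofReal_ne_top)]
    rw [mul_comm]
    exact hkey
  refine hdiv.trans ?_
  rw [← ENNReal.ofReal_div_of_pos (Real.exp_pos _), ← Real.exp_sub]
  apply ENNReal.ofReal_le_ofReal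
  rw [← Real.exp_add]
  apply Real.exp_le_exp.mpr
  have htx : -(1/8) * ((m - 1) / m) * (x / d) = -(t * x) := by
    rw [ht_def]; field_simp
  rw [htx]
  have h2t1 : 2 * t ≤ 1 := by
    nlinarith [mul_le_mul_of_nonneg_left hdR (by positivity : (0:ℝ) ≤ 2 * t)]
  linarith
end

section
/- For every real x ≥ 0, the almost-sure limit W_∞ of the normalized Galton–Watson martingale satisfies P(W_∞ ≥ x) ≤ 2 · exp(−((log 3 − 1)/40) · ((m−1)/m) · (x/d)). -/
open MeasureTheory ProbabilityTheory Filter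
open scoped ENNReal

lemma aux_exp_quad {u : ℝ} (h0 : 0 ≤ u) (h1 : u ≤ 1) : Real.exp u ≤ 1 + u + u ^ 2 := by
  have h := Real.exp_bound' h0 h1 (n := 2) (by norm_num)
  simp [Finset.sum_range_succ, Nat.factorial] at h
  nlinarith [sq_nonneg u]

lemma aux_theta_step (c m : ℝ) (d : ℕ) (hm : 1 < m) (hc : 0 < c) (hd : 0 < (d:ℝ))
    (h4 : 4*c*d ≤ m - 1) (h2 : 2*c*d ≤ 1) (k : ℕ) :
    (Real.exp ((c*(1+(1/m)^(k+1))*(1/m)^(k+1)) * d) - 1) * (m/d)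
      ≤ c*(1+(1/m)^k)*(1/m)^k := by
  have hm0 : 0 < m := by linarith
  set q : ℝ := (1/m)^k with hq
  have hq0 : 0 < q := pow_pos (by positivity) k
  have hq1 : q ≤ 1 := pow_le_one₀ (by positivity) (by rw [div_le_one hm0]; linarith)
  have hqm : (1/m : ℝ)^(k+1) = q/m := by rw [pow_succ]; ring
  rw [hqm]
  set u : ℝ := c*(1+q/m)*(q/m) * d with hu
  have hqm1 : q/m ≤ 1 := by
    rw [div_le_one hm0]; linarith
  have hqm0 : 0 < q/m := by positivity
  have hu0 : 0 ≤ u := by positivity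
  have hub : u ≤ 2*c*d*(q/m) := by
    have : c*(1+q/m)*(q/m)*d ≤ c*2*(q/m)*d := by
      have : (1+q/m) ≤ 2 := by linarith
      nlinarith
    linarith [this]
  have hu1 : u ≤ 1 := by nlinarith
  have hexp := aux_exp_quad hu0 hu1
  have key : (u + u^2) * (m/d) ≤ c*(1+q)*q := by
    have humd : u * (m/d) = c*(1+q/m)*q := by
      rw [hu]; field_simp <;> ring
    have expand : (u + u^2) * (m/d) = c*(1+q/m)*q*(1+u) := by
      rw [← humd]; ring
    rw [expand]
    have main : (1+q/m)*(1+u) ≤ 1+q := by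
      have h2u' : 2*u ≤ 4*c*d*(q/m) := by linarith
      have : 4*c*d*(q/m) ≤ (m-1)*(q/m) := by
        have := mul_le_mul_of_nonneg_right h4 (le_of_lt hqm0); linarith
      have hmq : (m-1)*(q/m) = q - q/m := by field_simp
      nlinarith [hqm0, hu0]
    calc c*(1+q/m)*q*(1+u) = (c*q) * ((1+q/m)*(1+u)) := by ring
      _ ≤ (c*q) * (1+q) := by
          apply mul_le_mul_of_nonneg_left main (by positivity)
      _ = c*(1+q)*q := by ring
  have hmd0 : 0 < m/d := by positivity
  calc (Real.exp (c*(1+q/m)*(q/m) * d) - 1) * (m/d) ≤ (u + u^2) * (m/d) := by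
        apply mul_le_mul_of_nonneg_right _ (le_of_lt hmd0)
        have : Real.exp u ≤ 1 + u + u^2 := hexp
        linarith
    _ ≤ c*(1+q)*q := key

set_option maxHeartbeats 2000000 in
/-- For every real x ≥ 0, the a.s. limit W_∞ = limsup W_n of the normalized Galton–Watson
martingale satisfies P(W_∞ ≥ x) ≤ 2 · exp(−((log 3 − 1)/40) · ((m−1)/m) · (x/d)). -/
theorem gw_tail_Winf_explicit
    {Ω : Type*} [MeasurableSpace Ω] (P : MeasureTheory.Measure Ω)
    [MeasureTheory.IsProbabilityMeasure P]
    (d : ℕ) (hd : 2 ≤ d) (m : ℝ) (hm : 1 < m)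
    (μ : MeasureTheory.Measure ℕ) [MeasureTheory.IsProbabilityMeasure μ]
    (hsupp : ∀ k : ℕ, d < k → μ {k} = 0)
    (hmean : ∑' k : ℕ, (k : ℝ) * (μ {k}).toReal = m)
    (ξ : ℕ → ℕ → Ω → ℕ)
    (hmeas : ∀ n i, Measurable (ξ n i))
    (hlaw : ∀ n i, MeasureTheory.Measure.map (ξ n i) P = μ)
    (hindep : ProbabilityTheory.iIndepFun
      (fun p : ℕ × ℕ => ξ p.1 p.2) P)
    (Z : ℕ → Ω → ℕ) (hZ0 : ∀ ω, Z 0 ω = 1)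
    (hZsucc : ∀ n ω, Z (n + 1) ω = ∑ i ∈ Finset.range (Z n ω), ξ n i ω)
    (W : ℕ → Ω → ℝ) (hW : ∀ n ω, W n ω = (Z n ω : ℝ) / m ^ n)
    (Winf : Ω → ℝ)
    (hWinf : ∀ ω, Winf ω = Filter.limsup (fun n => W n ω) Filter.atTop)
    (x : ℝ) (hx : 0 ≤ x) :
    P {ω | x ≤ Winf ω} ≤
      ENNReal.ofReal (2 * Real.exp (-((Real.log 3 - 1) / 40) * ((m - 1) / m) * (x / d))) := by
  classical
  letI mΩ : MeasurableSpace Ω := ‹_›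
  have hd0 : (0:ℝ) < d := by
    have : (2:ℝ) ≤ d := by exact_mod_cast hd
    linarith
  have hm0 : (0:ℝ) < m := lt_trans one_pos hm
  set c : ℝ := ((Real.log 3 - 1)/40) * ((m-1)/m) / d with hc
  have hlog3 : 1 < Real.log 3 := by
    rw [Real.lt_log_iff_exp_lt (by norm_num)]
    exact lt_trans Real.exp_one_lt_d9 (by norm_num)
  have hlog3' : Real.log 3 ≤ 2 := by
    have := Real.log_le_sub_one_of_pos (x := 3) (by norm_num); linarith
  have hmm1 : (m-1)/m < 1 := by rw [div_lt_one hm0]; linarith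
  have hmm0 : 0 < (m-1)/m := div_pos (by linarith) hm0
  have hc0 : 0 < c := by
    apply div_pos (mul_pos (by linarith) hmm0) hd0
  have hcd : c * d = ((Real.log 3 - 1)/40) * ((m-1)/m) := by
    rw [hc]; exact div_mul_cancel₀ _ (ne_of_gt hd0)
  have h4cd : 4*c*d ≤ m - 1 := by
    have h1 : 4*(c*d) = ((Real.log 3 - 1)/10) * ((m-1)/m) := by rw [hcd]; ring
    have h2 : ((Real.log 3 - 1)/10) * ((m-1)/m) ≤ (1/10) * (m-1) := by
      have hml : (m-1)/m ≤ (m-1) := by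
        rw [div_le_iff₀ hm0]; nlinarith
      nlinarith
    nlinarith
  have h2cd : 2*c*d ≤ 1 := by
    have h1 : 2*(c*d) = ((Real.log 3 - 1)/20) * ((m-1)/m) := by rw [hcd]; ring
    nlinarith
  have hc80 : c ≤ 1/80 := by
    have h1 : c * d ≤ 1/40 := by
      rw [hcd]; nlinarith
    have : c * 2 ≤ c * d := by
      apply mul_le_mul_of_nonneg_left _ (le_of_lt hc0)
      exact_mod_cast hd
    linarith
  set θ : ℕ → ℝ := fun n => c * (1 + (1/m)^n) * (1/m)^n with hθdef
  have hminv0 : (0:ℝ) < 1/m := by positivity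
  have hminv1 : (1/m:ℝ) ≤ 1 := by rw [div_le_one hm0]; linarith
  have hθpos : ∀ n, 0 < θ n := by
    intro n
    have := pow_pos hminv0 n
    have h1 : (0:ℝ) < 1 + (1/m)^n := by positivity
    simp only [hθdef]
    positivity
  have hθ0 : θ 0 = 2*c := by simp [hθdef]; ring
  -- filtration infrastructure
  set F : ℕ → MeasurableSpace Ω :=
    fun n => ⨆ p ∈ {p : ℕ × ℕ | p.1 < n}, MeasurableSpace.comap (ξ p.1 p.2) inferInstance with hF
  have hle : ∀ p : ℕ × ℕ, MeasurableSpace.comap (ξ p.1 p.2) inferInstance ≤ ‹MeasurableSpace Ω› :=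
    fun p => (hmeas p.1 p.2).comap_le
  have hFle : ∀ n, F n ≤ ‹MeasurableSpace Ω› := fun n => iSup₂_le fun p _ => hle p
  have hFmono : ∀ {a b : ℕ}, a ≤ b → F a ≤ F b := by
    intro a b hab
    simp only [hF]
    refine iSup₂_le fun p hp => ?_
    exact le_biSup (fun p : ℕ × ℕ => MeasurableSpace.comap (ξ p.1 p.2) inferInstance)
      (show p ∈ {p : ℕ × ℕ | p.1 < b} from lt_of_lt_of_le hp hab)
  have hcomapF : ∀ (p : ℕ × ℕ) (n : ℕ), p.1 < n →
      MeasurableSpace.comap (ξ p.1 p.2) inferInstance ≤ F n := by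
    intro p n hp
    simp only [hF]
    exact le_biSup (fun p : ℕ × ℕ => MeasurableSpace.comap (ξ p.1 p.2) inferInstance)
      (show p ∈ {p : ℕ × ℕ | p.1 < n} from hp)
  have hxim : ∀ (n i N : ℕ), n < N → Measurable[F N] (ξ n i) := by
    intro n i N hn
    exact Measurable.mono (Measurable.of_comap_le le_rfl) (hcomapF (n, i) N hn) le_rfl
  have hZmeas : ∀ n, Measurable[F n] (Z n) := by
    intro n
    induction n with
    | zero =>
        have : Z 0 = fun _ => 1 := funext hZ0
        rw [this]; exact measurable_const
    | succ n ih =>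
        apply @measurable_to_countable' ℕ Ω _ _ (F (n+1))
        intro z
        have hset : Z (n+1) ⁻¹' {z} =
            ⋃ y : ℕ, (Z n ⁻¹' {y}) ∩ ((fun ω => ∑ i ∈ Finset.range y, ξ n i ω) ⁻¹' {z}) := by
          ext ω
          simp only [Set.mem_preimage, Set.mem_singleton_iff, Set.mem_iUnion, Set.mem_inter_iff]
          constructor
          · intro h; exact ⟨Z n ω, rfl, by rw [← hZsucc n ω]; exact h⟩
          · rintro ⟨y, hy, hs⟩; rw [hZsucc n ω, hy]; exact hs
        rw [hset]
        apply MeasurableSet.iUnion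
        intro y
        apply MeasurableSet.inter
        · exact (ih.mono (hFmono (Nat.le_succ n)) le_rfl) (measurableSet_singleton y)
        · have : Measurable[F (n+1)] (fun ω => ∑ i ∈ Finset.range y, ξ n i ω) :=
            Finset.measurable_sum _ (fun i _ => hxim n i (n+1) (Nat.lt_succ_self n))
          exact this (measurableSet_singleton z)
  have hZamb : ∀ n, Measurable (Z n) := fun n => (hZmeas n).mono (hFle n) le_rfl
  have hIndepS : ∀ (S : Set (ℕ × ℕ)) (q : ℕ × ℕ), q ∉ S →
      Indep (⨆ p ∈ S, MeasurableSpace.comap (ξ p.1 p.2) inferInstance)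
        (MeasurableSpace.comap (ξ q.1 q.2) inferInstance) P := by
    intro S q hq
    have h := indep_biSup_compl (fun p => hle p) hindep.iIndep S
    exact indep_of_indep_of_le_right h
      (le_biSup (fun p : ℕ × ℕ => MeasurableSpace.comap (ξ p.1 p.2) inferInstance)
        (show q ∈ Sᶜ from hq))
  -- the moment generating function values
  set g : ℝ → ℕ → ℝ≥0∞ := fun t k => ENNReal.ofReal (Real.exp (t * k)) with hg
  have hgm : ∀ t, Measurable fun k : ℕ => g t k := fun t => measurable_from_top
  have hbase : ∀ n i : ℕ, @Measurable Ω ℕ (MeasurableSpace.comap (ξ n i) inferInstance)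
      inferInstance (ξ n i) := fun n i => Measurable.of_comap_le le_rfl
  have hgxi : ∀ (t : ℝ) (n i : ℕ),
      Measurable[MeasurableSpace.comap (ξ n i) inferInstance] (fun ω => g t (ξ n i ω)) :=
    fun t n i => (hgm t).comp (hbase n i)
  have hgZ : ∀ (t : ℝ) (n : ℕ), Measurable (fun ω => g t (Z n ω)) :=
    fun t n => (hgm t).comp (hZamb n)
  have hΦeq : ∀ (t : ℝ) (n i : ℕ), ∫⁻ ω, g t (ξ n i ω) ∂P = ∫⁻ k, g t k ∂μ := by
    intro t n i
    rw [← hlaw n i, lintegral_map (hgm t) (hmeas n i)]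
  -- sums over the support of μ
  have hnotmem : ∀ k : ℕ, k ∉ Finset.range (d+1) → μ {k} = 0 := by
    intro k hk
    exact hsupp k (by simpa using Nat.lt_of_succ_le (not_lt.1 (fun h => hk (Finset.mem_range.2 h))))
  have hμ1 : ∑ k ∈ Finset.range (d+1), (μ {k}).toReal = 1 := by
    have huniv : μ Set.univ = ∑' k : ℕ, μ {k} := by
      rw [← Set.iUnion_of_singleton ℕ]
      exact measure_iUnion (fun i j hij => by simp [Set.disjoint_left, hij])
        (fun i => measurableSet_singleton i)
    have hts : ∑' k : ℕ, μ {k} = ∑ k ∈ Finset.range (d+1), μ {k} :=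
      tsum_eq_sum (fun k hk => hnotmem k hk)
    have h1 : ∑ k ∈ Finset.range (d+1), μ {k} = 1 := by
      rw [← hts, ← huniv, measure_univ]
    have := congrArg ENNReal.toReal h1
    rwa [ENNReal.toReal_sum (fun k _ => measure_ne_top μ _)] at this
  have hμm : ∑ k ∈ Finset.range (d+1), (k:ℝ) * (μ {k}).toReal = m := by
    rw [← hmean]
    exact (tsum_eq_sum (fun k hk => by rw [hnotmem k hk]; simp)).symm
  -- key one-step mgf bound
  have hΦle : ∀ k : ℕ, ∫⁻ j, g (θ (k+1)) j ∂μ ≤ ENNReal.ofReal (Real.exp (θ k)) := by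
    intro k
    have ht0 : 0 ≤ θ (k+1) := le_of_lt (hθpos (k+1))
    set t := θ (k+1) with hts
    have hcountable : ∫⁻ j, g t j ∂μ = ∑' j : ℕ, g t j * μ {j} := lintegral_countable' _
    have hfin : ∑' j : ℕ, g t j * μ {j} = ∑ j ∈ Finset.range (d+1), g t j * μ {j} :=
      tsum_eq_sum (fun j hj => by rw [hnotmem j hj]; simp)
    have hreal : ∑ j ∈ Finset.range (d+1), g t j * μ {j}
        = ENNReal.ofReal (∑ j ∈ Finset.range (d+1), Real.exp (t*j) * (μ {j}).toReal) := by
      rw [ENNReal.ofReal_sum_of_nonneg (fun j _ => by positivity)]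
      refine Finset.sum_congr rfl (fun j _ => ?_)
      rw [hg]
      rw [ENNReal.ofReal_mul (Real.exp_nonneg _), ENNReal.ofReal_toReal (measure_ne_top μ _)]
    -- the real bound
    have hconv : ∀ j ∈ Finset.range (d+1),
        Real.exp (t*j) ≤ 1 + (Real.exp (t*d) - 1) * (j/d) := by
      intro j hj
      have hjd : (j:ℝ) ≤ d := by exact_mod_cast Nat.lt_succ_iff.1 (Finset.mem_range.1 hj)
      have hj0 : (0:ℝ) ≤ j := Nat.cast_nonneg j
      have hb0 : (0:ℝ) ≤ j/d := by positivity
      have ha0 : (0:ℝ) ≤ 1 - j/d := by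
        have : (j:ℝ)/d ≤ 1 := by rw [div_le_one hd0]; exact hjd
        linarith
      have hab : (1 - (j:ℝ)/d) + j/d = 1 := by ring
      have hcx := (convexOn_exp.2 (Set.mem_univ (0:ℝ)) (Set.mem_univ (t*d)) ha0 hb0 hab)
      simp only [smul_eq_mul, mul_zero, zero_add, Real.exp_zero, mul_one] at hcx
      have harg : (j:ℝ)/d * (t*d) = t*j := by field_simp
      rw [harg] at hcx
      linarith
    have hφb : ∑ j ∈ Finset.range (d+1), Real.exp (t*j) * (μ {j}).toReal
        ≤ Real.exp (θ k) := by
      have step1 : ∑ j ∈ Finset.range (d+1), Real.exp (t*j) * (μ {j}).toReal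
          ≤ ∑ j ∈ Finset.range (d+1), (1 + (Real.exp (t*d) - 1) * (j/d)) * (μ {j}).toReal := by
        refine Finset.sum_le_sum (fun j hj => ?_)
        exact mul_le_mul_of_nonneg_right (hconv j hj) ENNReal.toReal_nonneg
      have step2 : ∑ j ∈ Finset.range (d+1), (1 + (Real.exp (t*d) - 1) * (j/d)) * (μ {j}).toReal
          = 1 + (Real.exp (t*d) - 1) * (m/d) := by
        have expand : ∀ j : ℕ, (1 + (Real.exp (t*d) - 1) * (j/d)) * (μ {j}).toReal
            = (μ {j}).toReal + ((Real.exp (t*d) - 1)/d) * ((j:ℝ) * (μ {j}).toReal) := by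
          intro j; field_simp
        simp only [expand]
        rw [Finset.sum_add_distrib, hμ1, ← Finset.mul_sum, hμm]
        ring
      have step3 : 1 + (Real.exp (t*d) - 1) * (m/d) ≤ Real.exp ((Real.exp (t*d) - 1) * (m/d)) := by
        have := Real.add_one_le_exp ((Real.exp (t*d) - 1) * (m/d))
        linarith
      have step4 : (Real.exp (t*d) - 1) * (m/d) ≤ θ k := by
        have := aux_theta_step c m d hm hc0 hd0 h4cd h2cd k
        simpa [hts, hθdef] using this
      calc ∑ j ∈ Finset.range (d+1), Real.exp (t*j) * (μ {j}).toReal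
          ≤ ∑ j ∈ Finset.range (d+1), (1 + (Real.exp (t*d) - 1) * (j/d)) * (μ {j}).toReal := step1
        _ = 1 + (Real.exp (t*d) - 1) * (m/d) := step2
        _ ≤ Real.exp ((Real.exp (t*d) - 1) * (m/d)) := step3
        _ ≤ Real.exp (θ k) := Real.exp_le_exp.2 step4
    rw [hcountable, hfin, hreal]
    exact ENNReal.ofReal_le_ofReal hφb
  -- peeling lemma: expectation of a product over one generation against a past event
  have hpeel : ∀ (kk : ℕ) (C : Set Ω), MeasurableSet[F kk] C → ∀ (t : ℝ) (j : ℕ),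
      ∫⁻ ω in C, ∏ i ∈ Finset.range j, g t (ξ kk i ω) ∂P
        = P C * (∫⁻ v, g t v ∂μ) ^ j := by
    intro kk C hC t j
    have hCamb : MeasurableSet C := hFle kk C hC
    induction j with
    | zero => simp
    | succ j ih =>
        set S : Set (ℕ × ℕ) := {p : ℕ × ℕ | p.1 < kk ∨ (p.1 = kk ∧ p.2 < j)} with hS
        set Mf : MeasurableSpace Ω :=
          ⨆ p ∈ S, MeasurableSpace.comap (ξ p.1 p.2) inferInstance with hMf
        have hMfle : Mf ≤ mΩ := by
          rw [hMf]; exact iSup₂_le fun p _ => hle p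
        have hFMf : F kk ≤ Mf := by
          simp only [hF, hMf]
          refine iSup₂_le fun p hp => ?_
          exact le_biSup (fun p : ℕ × ℕ => MeasurableSpace.comap (ξ p.1 p.2) inferInstance)
            (show p ∈ S from Or.inl hp)
        have hcoMf : ∀ i : ℕ, i < j → MeasurableSpace.comap (ξ kk i) inferInstance ≤ Mf := by
          intro i hi
          exact le_biSup (fun p : ℕ × ℕ => MeasurableSpace.comap (ξ p.1 p.2) inferInstance)
            (show ((kk, i) : ℕ × ℕ) ∈ S from Or.inr ⟨rfl, hi⟩)
        have hqS : ((kk, j) : ℕ × ℕ) ∉ S := by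
          simp only [hS, Set.mem_setOf_eq]
          push_neg
          exact ⟨le_refl kk, fun _ => le_refl j⟩
        have hindep' : Indep Mf (MeasurableSpace.comap (ξ kk j) inferInstance) P :=
          hIndepS S (kk, j) hqS
        have hsplit : ∀ ω, C.indicator (fun ω => ∏ i ∈ Finset.range (j+1), g t (ξ kk i ω)) ω
            = C.indicator (fun ω => ∏ i ∈ Finset.range j, g t (ξ kk i ω)) ω * g t (ξ kk j ω) := by
          intro ω
          by_cases hω : ω ∈ C
          · simp [hω, Finset.prod_range_succ]
          · simp [hω]
        have hmf : Measurable[Mf] (C.indicator (fun ω => ∏ i ∈ Finset.range j, g t (ξ kk i ω))) := by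
          apply Measurable.indicator
          · exact Finset.measurable_prod _ (fun i hi =>
              ((hgm t).comp (hbase kk i)).mono (hcoMf i (Finset.mem_range.1 hi)) le_rfl)
          · exact hFMf C hC
        have hmg : Measurable[MeasurableSpace.comap (ξ kk j) inferInstance]
            (fun ω => g t (ξ kk j ω)) := hgxi t kk j
        calc ∫⁻ ω in C, ∏ i ∈ Finset.range (j+1), g t (ξ kk i ω) ∂P
            = ∫⁻ ω, C.indicator (fun ω => ∏ i ∈ Finset.range (j+1), g t (ξ kk i ω)) ω ∂P := by
              rw [lintegral_indicator hCamb]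
          _ = ∫⁻ ω, C.indicator (fun ω => ∏ i ∈ Finset.range j, g t (ξ kk i ω)) ω
                * g t (ξ kk j ω) ∂P := by
              exact lintegral_congr hsplit
          _ = (∫⁻ ω, C.indicator (fun ω => ∏ i ∈ Finset.range j, g t (ξ kk i ω)) ω ∂P)
                * ∫⁻ ω, g t (ξ kk j ω) ∂P :=
              lintegral_mul_eq_lintegral_mul_lintegral_of_independent_measurableSpace
                hMfle (hle (kk, j)) hindep' hmf hmg
          _ = (∫⁻ ω in C, ∏ i ∈ Finset.range j, g t (ξ kk i ω) ∂P) * ∫⁻ v, g t v ∂μ := by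
              rw [lintegral_indicator hCamb, hΦeq t kk j]
          _ = P C * (∫⁻ v, g t v ∂μ) ^ (j+1) := by
              rw [ih, pow_succ]; ring
  -- supermartingale step
  have hstep : ∀ (k : ℕ) (B : Set Ω), MeasurableSet[F k] B →
      ∫⁻ ω in B, g (θ (k+1)) (Z (k+1) ω) ∂P ≤ ∫⁻ ω in B, g (θ k) (Z k ω) ∂P := by
    intro k B hB
    have hBamb : MeasurableSet B := hFle k B hB
    have hBz : ∀ z : ℕ, MeasurableSet[F k] (B ∩ Z k ⁻¹' {z}) :=
      fun z => hB.inter (hZmeas k (measurableSet_singleton z))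
    have hBzamb : ∀ z : ℕ, MeasurableSet (B ∩ Z k ⁻¹' {z}) := fun z => hFle k _ (hBz z)
    have hBun : B = ⋃ z : ℕ, (B ∩ Z k ⁻¹' {z}) := by
      ext ω; simp
    have hdisj : Pairwise (Function.onFun Disjoint (fun z : ℕ => B ∩ Z k ⁻¹' {z})) := by
      intro z z' hzz'
      simp only [Function.onFun]
      refine Set.disjoint_left.2 ?_
      rintro ω ⟨-, hz⟩ ⟨-, hz'⟩
      simp only [Set.mem_preimage, Set.mem_singleton_iff] at hz hz'
      exact hzz' (by rw [← hz, ← hz'])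
    have hLHS : ∫⁻ ω in B, g (θ (k+1)) (Z (k+1) ω) ∂P
        = ∑' z : ℕ, ∫⁻ ω in B ∩ Z k ⁻¹' {z}, g (θ (k+1)) (Z (k+1) ω) ∂P := by
      conv_lhs => rw [hBun]
      exact lintegral_iUnion hBzamb hdisj _
    have hRHS : ∫⁻ ω in B, g (θ k) (Z k ω) ∂P
        = ∑' z : ℕ, ∫⁻ ω in B ∩ Z k ⁻¹' {z}, g (θ k) (Z k ω) ∂P := by
      conv_lhs => rw [hBun]
      exact lintegral_iUnion hBzamb hdisj _
    rw [hLHS, hRHS]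
    refine ENNReal.tsum_le_tsum (fun z => ?_)
    have hprod : ∫⁻ ω in B ∩ Z k ⁻¹' {z}, g (θ (k+1)) (Z (k+1) ω) ∂P
        = ∫⁻ ω in B ∩ Z k ⁻¹' {z}, ∏ i ∈ Finset.range z, g (θ (k+1)) (ξ k i ω) ∂P := by
      refine setLIntegral_congr_fun (hBzamb z) ?_
      rintro ω ⟨-, hz⟩
      simp only [Set.mem_preimage, Set.mem_singleton_iff] at hz
      simp only []
      rw [hZsucc k ω, hz, hg]
      simp only
      rw [show (θ (k+1) * ((∑ i ∈ Finset.range z, ξ k i ω : ℕ) : ℝ))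
            = ∑ i ∈ Finset.range z, θ (k+1) * (ξ k i ω : ℝ) by
          rw [Nat.cast_sum, Finset.mul_sum]]
      rw [Real.exp_sum]
      exact ENNReal.ofReal_prod_of_nonneg (fun i _ => Real.exp_nonneg _)
    have hconst : ∫⁻ ω in B ∩ Z k ⁻¹' {z}, g (θ k) (Z k ω) ∂P
        = P (B ∩ Z k ⁻¹' {z}) * ENNReal.ofReal (Real.exp (θ k * z)) := by
      have : ∫⁻ ω in B ∩ Z k ⁻¹' {z}, g (θ k) (Z k ω) ∂P
          = ∫⁻ _ in B ∩ Z k ⁻¹' {z}, ENNReal.ofReal (Real.exp (θ k * z)) ∂P := by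
        refine setLIntegral_congr_fun (hBzamb z) ?_
        rintro ω ⟨-, hz⟩
        simp only [Set.mem_preimage, Set.mem_singleton_iff] at hz
        rw [hg]; simp only [hz]
      rw [this, setLIntegral_const, mul_comm]
    rw [hprod, hconst, hpeel k _ (hBz z) (θ (k+1)) z]
    refine mul_le_mul_right ?_ _
    calc (∫⁻ v, g (θ (k+1)) v ∂μ) ^ z ≤ (ENNReal.ofReal (Real.exp (θ k))) ^ z :=
          pow_le_pow_left₀ zero_le (hΦle k) z
      _ = ENNReal.ofReal (Real.exp (θ k * z)) := by
          rw [← ENNReal.ofReal_pow (Real.exp_nonneg _), ← Real.exp_nat_mul, mul_comm]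
  have hWnn : ∀ n ω, 0 ≤ W n ω := by
    intro n ω; rw [hW]; positivity
  -- maximal inequality
  have key : ∀ y : ℝ, 0 < y →
      P {ω | ∃ n, y ≤ W n ω} ≤ ENNReal.ofReal (Real.exp (θ 0 - c*y)) := by
    intro y hy
    set G : ℕ → Set Ω := fun n => {ω | ∀ j, j < n → W j ω < y} with hGdef
    set A : ℕ → Set Ω := fun n => G n ∩ {ω | y ≤ W n ω} with hAdef
    have hWset : ∀ (j : ℕ) (s : Set ℝ) (N : ℕ), j ≤ N → MeasurableSet[F N] {ω | W j ω ∈ s} := by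
      intro j s N hjN
      have hwz : {ω | W j ω ∈ s} = Z j ⁻¹' {k : ℕ | (k:ℝ)/m^j ∈ s} := by
        ext ω; simp [hW j ω]
      rw [hwz]
      exact ((hZmeas j).mono (hFmono hjN) le_rfl) ((Set.to_countable _).measurableSet)
    have hGm : ∀ n N : ℕ, n ≤ N → MeasurableSet[F N] (G n) := by
      intro n N hnN
      have : G n = ⋂ j ∈ Finset.range n, {ω | W j ω ∈ Set.Iio y} := by
        ext ω; simp [hGdef]
      rw [this]
      exact MeasurableSet.biInter (Set.to_countable _)
        (fun j hj => hWset j (Set.Iio y) N (le_trans (Nat.le_of_lt_succ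
          (Nat.lt_succ_of_lt (Finset.mem_range.1 hj))) hnN))
    have hGN : ∀ N, MeasurableSet[F N] (G N) := fun N => hGm N N le_rfl
    have hGsuccN : ∀ N, MeasurableSet[F N] (G (N+1)) := by
      intro N
      have : G (N+1) = ⋂ j ∈ Finset.range (N+1), {ω | W j ω ∈ Set.Iio y} := by
        ext ω; simp [hGdef]
      rw [this]
      exact MeasurableSet.biInter (Set.to_countable _)
        (fun j hj => hWset j (Set.Iio y) N (Nat.le_of_lt_succ (Finset.mem_range.1 hj)))
    have hAN : ∀ N, MeasurableSet[F N] (A N) := by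
      intro N
      exact (hGN N).inter (hWset N (Set.Ici y) N le_rfl)
    have hAamb : ∀ N, MeasurableSet (A N) := fun N => hFle N _ (hAN N)
    have hGamb : ∀ N, MeasurableSet (G N) := fun N => hFle N _ (hGN N)
    have hsplitG : ∀ N, G N = A N ∪ G (N+1) := by
      intro N; ext ω
      simp only [hAdef, hGdef, Set.mem_union, Set.mem_inter_iff, Set.mem_setOf_eq]
      constructor
      · intro h
        by_cases hyN : y ≤ W N ω
        · exact Or.inl ⟨h, hyN⟩
        · refine Or.inr (fun j hj => ?_)
          rcases Nat.lt_succ_iff_lt_or_eq.1 hj with h' | h'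
          · exact h j h'
          · rw [h']; exact lt_of_not_ge hyN
      · rintro (⟨h, -⟩ | h)
        · exact h
        · exact fun j hj => h j (Nat.lt_succ_of_lt hj)
    have hdisjG : ∀ N, Disjoint (A N) (G (N+1)) := by
      intro N
      refine Set.disjoint_left.2 ?_
      rintro ω ⟨-, h2⟩ hg'
      simp only [hGdef, Set.mem_setOf_eq] at hg' h2
      exact absurd (hg' N (Nat.lt_succ_self N)) (not_lt.2 h2)
    have hmaximal : ∀ N, (∑ n ∈ Finset.range N, ∫⁻ ω in A n, g (θ n) (Z n ω) ∂P)
        + ∫⁻ ω in G N, g (θ N) (Z N ω) ∂P ≤ ∫⁻ ω in G 0, g (θ 0) (Z 0 ω) ∂P := by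
      intro N
      induction N with
      | zero => simp
      | succ N ih =>
          have hunion : ∫⁻ ω in G N, g (θ N) (Z N ω) ∂P
              = ∫⁻ ω in A N, g (θ N) (Z N ω) ∂P + ∫⁻ ω in G (N+1), g (θ N) (Z N ω) ∂P := by
            conv_lhs => rw [hsplitG N]
            exact lintegral_union (hGamb (N+1)) (hdisjG N)
          have hstepN : ∫⁻ ω in G (N+1), g (θ (N+1)) (Z (N+1) ω) ∂P
              ≤ ∫⁻ ω in G (N+1), g (θ N) (Z N ω) ∂P := hstep N (G (N+1)) (hGsuccN N)
          calc (∑ n ∈ Finset.range (N+1), ∫⁻ ω in A n, g (θ n) (Z n ω) ∂P)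
                + ∫⁻ ω in G (N+1), g (θ (N+1)) (Z (N+1) ω) ∂P
              = (∑ n ∈ Finset.range N, ∫⁻ ω in A n, g (θ n) (Z n ω) ∂P)
                + (∫⁻ ω in A N, g (θ N) (Z N ω) ∂P
                   + ∫⁻ ω in G (N+1), g (θ (N+1)) (Z (N+1) ω) ∂P) := by
                rw [Finset.sum_range_succ]; ring
            _ ≤ (∑ n ∈ Finset.range N, ∫⁻ ω in A n, g (θ n) (Z n ω) ∂P)
                + (∫⁻ ω in A N, g (θ N) (Z N ω) ∂P
                   + ∫⁻ ω in G (N+1), g (θ N) (Z N ω) ∂P) := by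
                gcongr
            _ = (∑ n ∈ Finset.range N, ∫⁻ ω in A n, g (θ n) (Z n ω) ∂P)
                + ∫⁻ ω in G N, g (θ N) (Z N ω) ∂P := by rw [hunion]
            _ ≤ _ := ih
    have hbase : ∫⁻ ω in G 0, g (θ 0) (Z 0 ω) ∂P = ENNReal.ofReal (Real.exp (θ 0)) := by
      have hG0 : G 0 = Set.univ := by ext ω; simp [hGdef]
      rw [hG0, Measure.restrict_univ]
      have hcongr : ∀ ω, g (θ 0) (Z 0 ω) = ENNReal.ofReal (Real.exp (θ 0)) := by
        intro ω; rw [hg]; simp [hZ0 ω]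
      rw [lintegral_congr hcongr, lintegral_const, measure_univ, mul_one]
    have hlow : ∀ n, ENNReal.ofReal (Real.exp (c*y)) * P (A n)
        ≤ ∫⁻ ω in A n, g (θ n) (Z n ω) ∂P := by
      intro n
      have hpt : ∀ ω ∈ A n, ENNReal.ofReal (Real.exp (c*y)) ≤ g (θ n) (Z n ω) := by
        rintro ω ⟨-, h2⟩
        simp only [Set.mem_setOf_eq] at h2
        have hmn : (0:ℝ) < m^n := pow_pos hm0 n
        have hZn : y * m^n ≤ (Z n ω : ℝ) := by
          rw [hW n ω] at h2
          exact (le_div_iff₀ hmn).1 h2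
        have hqmn : ((1:ℝ)/m)^n * m^n = 1 := by
          rw [div_pow, one_pow, div_mul_cancel₀]
          exact ne_of_gt hmn
        have harg : c*y ≤ θ n * (Z n ω : ℝ) := by
          have h1 : θ n * (y * m^n) ≤ θ n * Z n ω :=
            mul_le_mul_of_nonneg_left hZn (le_of_lt (hθpos n))
          have h2' : θ n * (y * m^n) = c * (1 + (1/m)^n) * y := by
            calc θ n * (y * m^n) = c*(1+(1/m)^n)*y*((1/m)^n*m^n) := by
                  simp only [hθdef]; ring
              _ = c*(1+(1/m)^n)*y := by rw [hqmn, mul_one]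
          have h3 : c*y ≤ c*(1+(1/m)^n)*y := by
            nlinarith [mul_pos (mul_pos hc0 (pow_pos hminv0 n)) hy]
          linarith
        rw [hg]
        exact ENNReal.ofReal_le_ofReal (Real.exp_le_exp.2 harg)
      calc ENNReal.ofReal (Real.exp (c*y)) * P (A n)
          = ∫⁻ _ in A n, ENNReal.ofReal (Real.exp (c*y)) ∂P := by
            rw [setLIntegral_const, mul_comm]
        _ ≤ ∫⁻ ω in A n, g (θ n) (Z n ω) ∂P := setLIntegral_mono (hgZ (θ n) n) hpt
    have hsumN : ∀ N, ∑ n ∈ Finset.range N, ENNReal.ofReal (Real.exp (c*y)) * P (A n)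
        ≤ ENNReal.ofReal (Real.exp (θ 0)) := by
      intro N
      calc ∑ n ∈ Finset.range N, ENNReal.ofReal (Real.exp (c*y)) * P (A n)
          ≤ ∑ n ∈ Finset.range N, ∫⁻ ω in A n, g (θ n) (Z n ω) ∂P :=
            Finset.sum_le_sum (fun n _ => hlow n)
        _ ≤ ENNReal.ofReal (Real.exp (θ 0)) := by
            have h := hmaximal N
            rw [hbase] at h
            exact le_trans (le_add_right le_rfl) h
    have htsum : ENNReal.ofReal (Real.exp (c*y)) * ∑' n, P (A n)
        ≤ ENNReal.ofReal (Real.exp (θ 0)) := by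
      rw [← ENNReal.tsum_mul_left, ENNReal.tsum_eq_iSup_sum]
      refine iSup_le (fun s => ?_)
      have hsub : s ⊆ Finset.range (s.sup id + 1) := by
        intro n hn
        exact Finset.mem_range.2 (Nat.lt_succ_of_le (Finset.le_sup (f := id) hn))
      calc ∑ n ∈ s, ENNReal.ofReal (Real.exp (c*y)) * P (A n)
          ≤ ∑ n ∈ Finset.range (s.sup id + 1), ENNReal.ofReal (Real.exp (c*y)) * P (A n) :=
            Finset.sum_le_sum_of_subset hsub
        _ ≤ _ := hsumN _
    have hcover : {ω | ∃ n, y ≤ W n ω} ⊆ ⋃ n, A n := by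
      intro ω hω
      have hex : ∃ n, y ≤ W n ω := hω
      refine Set.mem_iUnion.2 ⟨Nat.find hex, ⟨?_, Nat.find_spec hex⟩⟩
      intro j hj
      exact lt_of_not_ge (Nat.find_min hex hj)
    have hPcover : P {ω | ∃ n, y ≤ W n ω} ≤ ∑' n, P (A n) :=
      le_trans (measure_mono hcover) (measure_iUnion_le _)
    have hmul : ENNReal.ofReal (Real.exp (c*y)) * P {ω | ∃ n, y ≤ W n ω}
        ≤ ENNReal.ofReal (Real.exp (c*y)) * ENNReal.ofReal (Real.exp (θ 0 - c*y)) := by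
      have hsplit2 : ENNReal.ofReal (Real.exp (θ 0))
          = ENNReal.ofReal (Real.exp (c*y)) * ENNReal.ofReal (Real.exp (θ 0 - c*y)) := by
        rw [← ENNReal.ofReal_mul (Real.exp_nonneg _), ← Real.exp_add,
          show c*y + (θ 0 - c*y) = θ 0 by ring]
      calc ENNReal.ofReal (Real.exp (c*y)) * P {ω | ∃ n, y ≤ W n ω}
          ≤ ENNReal.ofReal (Real.exp (c*y)) * ∑' n, P (A n) := mul_le_mul_right hPcover _
        _ ≤ ENNReal.ofReal (Real.exp (θ 0)) := htsum
        _ = _ := hsplit2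
    exact (ENNReal.mul_le_mul_iff_right
      (ne_of_gt (ENNReal.ofReal_pos.2 (Real.exp_pos _))) ENNReal.ofReal_ne_top).1 hmul
  -- pass to the limsup event and let y → x
  have hfinal : P {ω | x ≤ Winf ω} ≤ ENNReal.ofReal (Real.exp (θ 0 - c*x)) := by
    rcases eq_or_lt_of_le hx with hx0 | hxpos
    · rw [← hx0]
      calc P {ω | (0:ℝ) ≤ Winf ω} ≤ 1 := prob_le_one
        _ ≤ ENNReal.ofReal (Real.exp (θ 0 - c*0)) := by
            rw [ENNReal.one_le_ofReal]
            rw [mul_zero, sub_zero]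
            have := hθpos 0
            rw [show (1:ℝ) = Real.exp 0 from (Real.exp_zero).symm]
            exact Real.exp_le_exp.2 (le_of_lt this)
    · have hP : ∀ y ∈ Set.Ioo (0:ℝ) x,
          P {ω | x ≤ Winf ω} ≤ ENNReal.ofReal (Real.exp (θ 0 - c*y)) := by
        rintro y ⟨hy0, hyx⟩
        refine le_trans (measure_mono ?_) (key y hy0)
        intro ω hω
        simp only [Set.mem_setOf_eq] at hω ⊢
        have hcb : Filter.IsCoboundedUnder (· ≤ ·) Filter.atTop (fun n => W n ω) := by
          refine ⟨0, fun a ha => ?_⟩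
          rw [Filter.eventually_map] at ha
          obtain ⟨n, hn⟩ := ha.exists
          exact le_trans (hWnn n ω) hn
        have hlim : y < Filter.limsup (fun n => W n ω) Filter.atTop := by
          rw [← hWinf ω]; exact lt_of_lt_of_le hyx hω
        obtain ⟨n, hn⟩ := (Filter.frequently_lt_of_lt_limsup hcb hlim).exists
        exact ⟨n, le_of_lt hn⟩
      have htend : Filter.Tendsto (fun y : ℝ => ENNReal.ofReal (Real.exp (θ 0 - c*y)))
          (nhdsWithin x (Set.Iio x)) (nhds (ENNReal.ofReal (Real.exp (θ 0 - c*x)))) := by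
        apply Filter.Tendsto.mono_left _ nhdsWithin_le_nhds
        exact (ENNReal.continuous_ofReal.comp (Real.continuous_exp.comp
          (continuous_const.sub (continuous_const.mul continuous_id)))).tendsto x
      refine ge_of_tendsto htend ?_
      filter_upwards [Ioo_mem_nhdsLT_of_mem (show x ∈ Set.Ioc (0:ℝ) x from ⟨hxpos, le_rfl⟩)]
        with y hy
      exact hP y hy
  refine le_trans hfinal ?_
  apply ENNReal.ofReal_le_ofReal
  have hexp2c : Real.exp (θ 0) ≤ 2 := by
    rw [hθ0]
    have h1 : 2*c ≤ 1 := by linarith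
    have h2 := aux_exp_quad (u := 2*c) (by positivity) h1
    nlinarith [hc0, hc80]
  have harg : -((Real.log 3 - 1) / 40) * ((m - 1) / m) * (x / d) = -(c*x) := by
    rw [hc]; field_simp
  rw [harg]
  calc Real.exp (θ 0 - c*x) = Real.exp (θ 0) * Real.exp (-(c*x)) := by
        rw [← Real.exp_add]; ring_nf
    _ ≤ 2 * Real.exp (-(c*x)) := mul_le_mul_of_nonneg_right hexp2c (Real.exp_nonneg _)
end

section
/- For every real x > 0, P( sup_{n∈ℕ} W_n ≥ x ) ≤ (1 + d/(m−1)) · x^{−2}. -/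
open MeasureTheory ProbabilityTheory ENNReal Set Finset

namespace GWAux

variable {Ω : Type*} [MeasurableSpace Ω]

/-- σ-algebra generated by the first `n` generations of offspring variables. -/
def gwG (ξ : ℕ → ℕ → Ω → ℕ) (n : ℕ) : MeasurableSpace Ω :=
  ⨆ p ∈ {q : ℕ × ℕ | q.1 < n}, MeasurableSpace.comap (ξ p.1 p.2) inferInstance

/-- σ-algebra generated by generations `≥ n`. -/
def gwH (ξ : ℕ → ℕ → Ω → ℕ) (n : ℕ) : MeasurableSpace Ω :=
  ⨆ p ∈ {q : ℕ × ℕ | q.1 < n}ᶜ, MeasurableSpace.comap (ξ p.1 p.2) inferInstance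

variable {ξ : ℕ → ℕ → Ω → ℕ}

lemma gwG_le (hmeas : ∀ n i, Measurable (ξ n i)) (n : ℕ) :
    gwG ξ n ≤ ‹MeasurableSpace Ω› :=
  iSup₂_le fun p _ => (hmeas p.1 p.2).comap_le

lemma gwH_le (hmeas : ∀ n i, Measurable (ξ n i)) (n : ℕ) :
    gwH ξ n ≤ ‹MeasurableSpace Ω› :=
  iSup₂_le fun p _ => (hmeas p.1 p.2).comap_le

lemma gwG_mono : Monotone (gwG ξ) := fun a b hab =>
  biSup_mono fun p (hp : p.1 < a) => lt_of_lt_of_le hp hab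

lemma measurable_gwG_xi {n i k : ℕ} (hk : i < n) : Measurable[gwG ξ n] (ξ i k) := by
  refine Measurable.of_comap_le ?_
  exact le_iSup₂ (f := fun p (_ : p.1 < n) => MeasurableSpace.comap (ξ p.1 p.2) inferInstance) (i, k) hk

lemma measurable_gwH_xi {n i k : ℕ} (hk : n ≤ i) : Measurable[gwH ξ n] (ξ i k) := by
  refine Measurable.of_comap_le ?_
  exact le_iSup₂ (f := fun p (_ : p ∈ {q : ℕ × ℕ | q.1 < n}ᶜ) => MeasurableSpace.comap (ξ p.1 p.2) inferInstance) (i, k) (by simp [hk, Nat.not_lt.2 hk])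

lemma indep_gwGH (hmeas : ∀ n i, Measurable (ξ n i)) {P : Measure Ω}
    (hindep : iIndepFun (fun p : ℕ × ℕ => ξ p.1 p.2) P)
    (n : ℕ) : Indep (gwG ξ n) (gwH ξ n) P :=
  indep_biSup_compl (s := fun p : ℕ × ℕ => MeasurableSpace.comap (ξ p.1 p.2) inferInstance)
    (fun p => (hmeas p.1 p.2).comap_le) hindep {q : ℕ × ℕ | q.1 < n}

end GWAux

namespace GWAux

variable {Ω : Type*} [MeasurableSpace Ω] {ξ : ℕ → ℕ → Ω → ℕ}

lemma measurable_gwH_sum {n n' l : ℕ} (h : n ≤ n') :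
    Measurable[gwH ξ n] (fun ω => ∑ i ∈ Finset.range l, ξ n' i ω) :=
  Finset.measurable_sum _ (fun _ _ => measurable_gwH_xi h)

lemma measurable_gwG_Z {Z : ℕ → Ω → ℕ} (hZ0 : ∀ ω, Z 0 ω = 1)
    (hZsucc : ∀ n ω, Z (n + 1) ω = ∑ i ∈ Finset.range (Z n ω), ξ n i ω) :
    ∀ n, Measurable[gwG ξ n] (Z n) := by
  intro n
  induction n with
  | zero =>
    have : Z 0 = fun _ => 1 := funext hZ0
    rw [this]; exact measurable_const
  | succ n ih =>
    refine @measurable_to_countable' ℕ Ω _ _ (gwG ξ (n + 1)) (Z (n + 1)) fun j => ?_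
    have hset : (Z (n + 1)) ⁻¹' {j} =
        ⋃ l, ((Z n ⁻¹' {l}) ∩ ((fun ω => ∑ i ∈ Finset.range l, ξ n i ω) ⁻¹' {j})) := by
      ext ω
      simp only [Set.mem_preimage, Set.mem_iUnion, Set.mem_inter_iff, Set.mem_singleton_iff]
      constructor
      · intro h; exact ⟨Z n ω, rfl, by rw [← hZsucc n ω]; exact h⟩
      · rintro ⟨l, hl, hs⟩; rw [hZsucc n ω, hl]; exact hs
    rw [hset]
    refine MeasurableSet.iUnion fun l => MeasurableSet.inter ?_ ?_
    · exact (ih.mono (gwG_mono (Nat.le_succ n)) le_rfl) (measurableSet_singleton l)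
    · exact Finset.measurable_sum _ (fun i _ => measurable_gwG_xi (Nat.lt_succ_self n))
        (measurableSet_singleton j)

lemma lintegral_mul_indep (hmeas : ∀ n i, Measurable (ξ n i)) {P : Measure Ω}
    (hindep : iIndepFun (fun p : ℕ × ℕ => ξ p.1 p.2) P)
    (n : ℕ) {C : Set Ω} (hC : MeasurableSet[gwG ξ n] C) {f : Ω → ℝ≥0∞}
    (hf : Measurable[gwH ξ n] f) :
    ∫⁻ ω in C, f ω ∂P = P C * ∫⁻ ω, f ω ∂P := by
  have hCa : MeasurableSet C := gwG_le hmeas n _ hC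
  have h1 : ∫⁻ ω in C, f ω ∂P
      = ∫⁻ ω, (C.indicator (1 : Ω → ℝ≥0∞) ω) * f ω ∂P := by
    rw [← lintegral_indicator hCa]
    congr 1; ext ω
    by_cases h : ω ∈ C <;> simp [h]
  have h2 := lintegral_mul_eq_lintegral_mul_lintegral_of_independent_measurableSpace
    (f := C.indicator (1 : Ω → ℝ≥0∞)) (g := f)
    (gwG_le hmeas n) (gwH_le hmeas n) (indep_gwGH hmeas hindep n)
    (measurable_const.indicator hC) hf
  rw [h1, h2, lintegral_indicator_one hCa]

lemma lintegral_partition {P : Measure Ω} (Z : Ω → ℕ) (hZ : Measurable Z) {C : Set Ω}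
    (hC : MeasurableSet C) (f : Ω → ℝ≥0∞) :
    ∫⁻ ω in C, f ω ∂P = ∑' l : ℕ, ∫⁻ ω in C ∩ Z ⁻¹' {l}, f ω ∂P := by
  have hmu : C = ⋃ l : ℕ, C ∩ Z ⁻¹' {l} := by ext ω; simp
  have hmeasl : ∀ l : ℕ, MeasurableSet (C ∩ Z ⁻¹' {l}) :=
    fun l => hC.inter (hZ (measurableSet_singleton l))
  have hdisj : Pairwise (Function.onFun Disjoint fun l : ℕ => C ∩ Z ⁻¹' {l}) := by
    intro i j hij
    refine Set.disjoint_left.2 fun ω hωi hωj => hij ?_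
    have h1 : Z ω = i := hωi.2
    have h2 : Z ω = j := hωj.2
    rw [← h1, h2]
  calc ∫⁻ ω in C, f ω ∂P = ∫⁻ ω in ⋃ l : ℕ, C ∩ Z ⁻¹' {l}, f ω ∂P := by rw [← hmu]
    _ = ∑' l : ℕ, ∫⁻ ω in C ∩ Z ⁻¹' {l}, f ω ∂P := lintegral_iUnion hmeasl hdisj f

lemma lintegral_comp_partition {P : Measure Ω} (Z : Ω → ℕ) (hZ : Measurable Z) {C : Set Ω}
    (hC : MeasurableSet C) (g : ℕ → ℝ≥0∞) :
    ∫⁻ ω in C, g (Z ω) ∂P = ∑' l : ℕ, P (C ∩ Z ⁻¹' {l}) * g l := by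
  rw [lintegral_partition Z hZ hC]
  refine tsum_congr fun l => ?_
  have : ∫⁻ ω in C ∩ Z ⁻¹' {l}, g (Z ω) ∂P = ∫⁻ _ in C ∩ Z ⁻¹' {l}, g l ∂P := by
    refine setLIntegral_congr_fun (hC.inter (hZ (measurableSet_singleton l))) ?_
    intro ω hω
    simp only [show Z ω = l from hω.2]
  rw [this, setLIntegral_const, mul_comm]

end GWAux

namespace GWAux

section Moments

open MeasureTheory

variable {Ω : Type*} [MeasurableSpace Ω] {P : Measure Ω}

lemma tsum_eq_range_sum {d : ℕ} (μ : Measure ℕ)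
    (hsupp : ∀ k : ℕ, d < k → μ {k} = 0) (f : ℕ → ℝ≥0∞) :
    ∑' k : ℕ, f k * μ {k} = ∑ k ∈ Finset.range (d + 1), f k * μ {k} := by
  refine tsum_eq_sum fun k hk => ?_
  rw [hsupp k (by simp only [Finset.mem_range] at hk; omega), mul_zero]

lemma lintegral_comp_law {ξi : Ω → ℕ} (hξ : Measurable ξi) {μ : Measure ℕ}
    (hlaw : Measure.map ξi P = μ) (g : ℕ → ℝ≥0∞) :
    ∫⁻ ω, g (ξi ω) ∂P = ∑' k : ℕ, g k * μ {k} :=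
  calc ∫⁻ ω, g (ξi ω) ∂P = ∫⁻ k, g k ∂(Measure.map ξi P) :=
        (lintegral_map (measurable_of_countable g) hξ).symm
    _ = ∫⁻ k, g k ∂μ := by rw [hlaw]
    _ = ∑' k : ℕ, g k * μ {k} := lintegral_countable' g

lemma sum_p_eq_one {d : ℕ} (μ : Measure ℕ) [IsProbabilityMeasure μ]
    (hsupp : ∀ k : ℕ, d < k → μ {k} = 0) :
    ∑ k ∈ Finset.range (d + 1), (μ {k}).toReal = 1 := by
  have h1 : ∑' k : ℕ, (fun _ : ℕ => (1 : ℝ≥0∞)) k * μ {k} = 1 := by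
    rw [← lintegral_countable' (fun _ : ℕ => (1 : ℝ≥0∞))]
    simp
  rw [tsum_eq_range_sum μ hsupp] at h1
  have := congrArg ENNReal.toReal h1
  rw [ENNReal.toReal_sum (fun k _ => by simp [measure_ne_top])] at this
  simpa using this

lemma sum_kp_eq_m {d : ℕ} (μ : Measure ℕ) {m : ℝ}
    (hsupp : ∀ k : ℕ, d < k → μ {k} = 0)
    (hmean : ∑' k : ℕ, (k : ℝ) * (μ {k}).toReal = m) :
    ∑ k ∈ Finset.range (d + 1), (k : ℝ) * (μ {k}).toReal = m := by
  rw [← hmean]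
  exact (tsum_eq_sum fun k hk => by
    rw [hsupp k (by simp only [Finset.mem_range] at hk; omega)]; simp).symm

lemma q2_le_dm {d : ℕ} (μ : Measure ℕ) {m : ℝ}
    (hsupp : ∀ k : ℕ, d < k → μ {k} = 0)
    (hmean : ∑' k : ℕ, (k : ℝ) * (μ {k}).toReal = m) :
    ∑ k ∈ Finset.range (d + 1), (k : ℝ) ^ 2 * (μ {k}).toReal ≤ d * m := by
  have h1 : ∀ k ∈ Finset.range (d + 1),
      (k : ℝ) ^ 2 * (μ {k}).toReal ≤ d * ((k : ℝ) * (μ {k}).toReal) := by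
    intro k hk
    have hkd : (k : ℝ) ≤ d := by
      simp only [Finset.mem_range] at hk; exact_mod_cast Nat.lt_succ_iff.1 hk
    have h0 : (0 : ℝ) ≤ (μ {k}).toReal := ENNReal.toReal_nonneg
    have : (k : ℝ) ^ 2 ≤ d * k := by nlinarith [Nat.cast_nonneg (α := ℝ) k]
    calc (k : ℝ) ^ 2 * (μ {k}).toReal ≤ (d * k) * (μ {k}).toReal := by nlinarith
      _ = d * ((k : ℝ) * (μ {k}).toReal) := by ring
  calc ∑ k ∈ Finset.range (d + 1), (k : ℝ) ^ 2 * (μ {k}).toReal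
      ≤ ∑ k ∈ Finset.range (d + 1), (d : ℝ) * ((k : ℝ) * (μ {k}).toReal) :=
        Finset.sum_le_sum h1
    _ = d * m := by rw [← Finset.mul_sum, sum_kp_eq_m μ hsupp hmean]

lemma m_sq_le_q2 {d : ℕ} (μ : Measure ℕ) [IsProbabilityMeasure μ] {m : ℝ}
    (hsupp : ∀ k : ℕ, d < k → μ {k} = 0)
    (hmean : ∑' k : ℕ, (k : ℝ) * (μ {k}).toReal = m) :
    m ^ 2 ≤ ∑ k ∈ Finset.range (d + 1), (k : ℝ) ^ 2 * (μ {k}).toReal := by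
  have hCS := Finset.sum_mul_sq_le_sq_mul_sq (Finset.range (d + 1))
    (fun k => Real.sqrt (μ {k}).toReal) (fun k => (k : ℝ) * Real.sqrt (μ {k}).toReal)
  have he : ∀ k : ℕ, Real.sqrt (μ {k}).toReal * ((k : ℝ) * Real.sqrt (μ {k}).toReal)
      = (k : ℝ) * (μ {k}).toReal := by
    intro k
    rw [show Real.sqrt (μ {k}).toReal * ((k : ℝ) * Real.sqrt (μ {k}).toReal)
        = (k : ℝ) * (Real.sqrt (μ {k}).toReal * Real.sqrt (μ {k}).toReal) by ring,
      Real.mul_self_sqrt ENNReal.toReal_nonneg]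
  have he2 : ∀ k : ℕ, (Real.sqrt (μ {k}).toReal) ^ 2 = (μ {k}).toReal := fun k =>
    Real.sq_sqrt ENNReal.toReal_nonneg
  have he3 : ∀ k : ℕ, ((k : ℝ) * Real.sqrt (μ {k}).toReal) ^ 2
      = (k : ℝ) ^ 2 * (μ {k}).toReal := by
    intro k; rw [mul_pow, he2]
  simp only [he, he2, he3] at hCS
  rw [sum_kp_eq_m μ hsupp hmean, sum_p_eq_one μ hsupp, one_mul] at hCS
  exact hCS

lemma lint_xi_one {d : ℕ} {ξi : Ω → ℕ} (hξ : Measurable ξi) {μ : Measure ℕ} [MeasureTheory.IsProbabilityMeasure μ] {m : ℝ}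
    (hlaw : Measure.map ξi P = μ)
    (hsupp : ∀ k : ℕ, d < k → μ {k} = 0)
    (hmean : ∑' k : ℕ, (k : ℝ) * (μ {k}).toReal = m) :
    ∫⁻ ω, (ξi ω : ℝ≥0∞) ∂P = ENNReal.ofReal m := by
  rw [lintegral_comp_law hξ hlaw (fun k => (k : ℝ≥0∞)),
    tsum_eq_range_sum μ hsupp, ← sum_kp_eq_m μ hsupp hmean,
    ENNReal.ofReal_sum_of_nonneg (fun k _ =>
      mul_nonneg (Nat.cast_nonneg k) ENNReal.toReal_nonneg)]
  refine Finset.sum_congr rfl fun k _ => ?_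
  rw [ENNReal.ofReal_mul (Nat.cast_nonneg k), ENNReal.ofReal_natCast,
    ENNReal.ofReal_toReal (measure_ne_top μ _)]

lemma lint_xi_sq {d : ℕ} {ξi : Ω → ℕ} (hξ : Measurable ξi) {μ : Measure ℕ} [MeasureTheory.IsProbabilityMeasure μ]
    (hlaw : Measure.map ξi P = μ)
    (hsupp : ∀ k : ℕ, d < k → μ {k} = 0) :
    ∫⁻ ω, (ξi ω : ℝ≥0∞) ^ 2 ∂P
      = ENNReal.ofReal (∑ k ∈ Finset.range (d + 1), (k : ℝ) ^ 2 * (μ {k}).toReal) := by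
  rw [lintegral_comp_law hξ hlaw (fun k => (k : ℝ≥0∞) ^ 2),
    tsum_eq_range_sum μ hsupp,
    ENNReal.ofReal_sum_of_nonneg (fun k _ =>
      mul_nonneg (sq_nonneg _) ENNReal.toReal_nonneg)]
  refine Finset.sum_congr rfl fun k _ => ?_
  rw [ENNReal.ofReal_mul (sq_nonneg _), ENNReal.ofReal_pow (Nat.cast_nonneg k),
    ENNReal.ofReal_natCast, ENNReal.ofReal_toReal (measure_ne_top μ _)]

end Moments

end GWAux

namespace GWAux

section Sums

variable {Ω : Type*} [MeasurableSpace Ω] {ξ : ℕ → ℕ → Ω → ℕ} {P : MeasureTheory.Measure Ω}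

lemma meas_cast_xi (hmeas : ∀ n i, Measurable (ξ n i)) (n i : ℕ) :
    Measurable (fun ω => (ξ n i ω : ℝ≥0∞)) :=
  (measurable_of_countable _).comp (hmeas n i)

lemma lint_prod_ne (hmeas : ∀ n i, Measurable (ξ n i))
    (hindep : ProbabilityTheory.iIndepFun
      (fun p : ℕ × ℕ => ξ p.1 p.2) P)
    {M1 : ℝ≥0∞} (n : ℕ) (he1 : ∀ i, ∫⁻ ω, (ξ n i ω : ℝ≥0∞) ∂P = M1)
    {i j : ℕ} (hij : i ≠ j) :
    ∫⁻ ω, (ξ n i ω : ℝ≥0∞) * (ξ n j ω : ℝ≥0∞) ∂P = M1 * M1 := by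
  have hind : ProbabilityTheory.IndepFun (fun ω => (ξ n i ω : ℝ≥0∞))
      (fun ω => (ξ n j ω : ℝ≥0∞)) P := by
    have h := hindep.indepFun (i := (n, i)) (j := (n, j)) (by simp [hij])
    exact h.comp (measurable_of_countable _) (measurable_of_countable _)
  have := ProbabilityTheory.lintegral_mul_eq_lintegral_mul_lintegral_of_indepFun
    (meas_cast_xi hmeas n i) (meas_cast_xi hmeas n j) hind
  simpa [he1 i, he1 j] using this

lemma lint_S_one (hmeas : ∀ n i, Measurable (ξ n i)) {M1 : ℝ≥0∞} (n l : ℕ)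
    (he1 : ∀ i, ∫⁻ ω, (ξ n i ω : ℝ≥0∞) ∂P = M1) :
    ∫⁻ ω, ((∑ i ∈ Finset.range l, ξ n i ω : ℕ) : ℝ≥0∞) ∂P = l * M1 := by
  have hcast : ∀ ω, ((∑ i ∈ Finset.range l, ξ n i ω : ℕ) : ℝ≥0∞)
      = ∑ i ∈ Finset.range l, (ξ n i ω : ℝ≥0∞) := by intro ω; push_cast; rfl
  simp only [hcast]
  rw [MeasureTheory.lintegral_finset_sum _ (fun i _ => meas_cast_xi hmeas n i)]
  simp [he1, Finset.sum_const, nsmul_eq_mul]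

lemma lint_S_sq_expand (hmeas : ∀ n i, Measurable (ξ n i)) (n l : ℕ) :
    ∫⁻ ω, ((∑ i ∈ Finset.range l, ξ n i ω : ℕ) : ℝ≥0∞) ^ 2 ∂P
      = ∑ i ∈ Finset.range l, ∑ j ∈ Finset.range l,
          ∫⁻ ω, (ξ n i ω : ℝ≥0∞) * (ξ n j ω : ℝ≥0∞) ∂P := by
  have hcast : ∀ ω, ((∑ i ∈ Finset.range l, ξ n i ω : ℕ) : ℝ≥0∞) ^ 2
      = ∑ i ∈ Finset.range l, ∑ j ∈ Finset.range l,
          (ξ n i ω : ℝ≥0∞) * (ξ n j ω : ℝ≥0∞) := by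
    intro ω
    rw [show ((∑ i ∈ Finset.range l, ξ n i ω : ℕ) : ℝ≥0∞)
        = ∑ i ∈ Finset.range l, (ξ n i ω : ℝ≥0∞) by push_cast; rfl, sq,
      Finset.sum_mul_sum]
  simp only [hcast]
  rw [MeasureTheory.lintegral_finset_sum _
    (f := fun i ω => ∑ j ∈ Finset.range l, (ξ n i ω : ℝ≥0∞) * (ξ n j ω : ℝ≥0∞))
    (fun i _ => Finset.measurable_sum _
    (fun j _ => (meas_cast_xi hmeas n i).mul (meas_cast_xi hmeas n j)))]
  exact Finset.sum_congr rfl fun i _ =>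
    MeasureTheory.lintegral_finset_sum _
      (f := fun j ω => (ξ n i ω : ℝ≥0∞) * (ξ n j ω : ℝ≥0∞))
      (fun j _ => (meas_cast_xi hmeas n i).mul (meas_cast_xi hmeas n j))

lemma lint_S_sq_le (hmeas : ∀ n i, Measurable (ξ n i))
    (hindep : ProbabilityTheory.iIndepFun
      (fun p : ℕ × ℕ => ξ p.1 p.2) P)
    {M1 M2 : ℝ≥0∞} (n l : ℕ)
    (he1 : ∀ i, ∫⁻ ω, (ξ n i ω : ℝ≥0∞) ∂P = M1)
    (he2 : ∀ i, ∫⁻ ω, (ξ n i ω : ℝ≥0∞) ^ 2 ∂P = M2) :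
    ∫⁻ ω, ((∑ i ∈ Finset.range l, ξ n i ω : ℕ) : ℝ≥0∞) ^ 2 ∂P
      ≤ (l : ℝ≥0∞) * M2 + (l : ℝ≥0∞) ^ 2 * M1 ^ 2 := by
  rw [lint_S_sq_expand hmeas n l]
  have hbound : ∀ i ∈ Finset.range l, ∀ j ∈ Finset.range l,
      ∫⁻ ω, (ξ n i ω : ℝ≥0∞) * (ξ n j ω : ℝ≥0∞) ∂P
        ≤ M1 * M1 + (if i = j then M2 else 0) := by
    intro i _ j _
    by_cases hij : i = j
    · subst hij
      simp only [if_pos rfl]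
      have : ∫⁻ ω, (ξ n i ω : ℝ≥0∞) * (ξ n i ω : ℝ≥0∞) ∂P = M2 := by
        rw [← he2 i]; congr 1; ext ω; rw [sq]
      rw [this]; exact le_add_self
    · rw [lint_prod_ne hmeas hindep n he1 hij, if_neg hij, add_zero]
  calc ∑ i ∈ Finset.range l, ∑ j ∈ Finset.range l,
        ∫⁻ ω, (ξ n i ω : ℝ≥0∞) * (ξ n j ω : ℝ≥0∞) ∂P
      ≤ ∑ i ∈ Finset.range l, ∑ j ∈ Finset.range l,
          (M1 * M1 + if i = j then M2 else 0) :=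
        Finset.sum_le_sum fun i hi => Finset.sum_le_sum fun j hj => hbound i hi j hj
    _ = (l : ℝ≥0∞) * M2 + (l : ℝ≥0∞) ^ 2 * M1 ^ 2 := by
        simp only [Finset.sum_add_distrib, Finset.sum_const, Finset.card_range,
          nsmul_eq_mul, Finset.sum_ite_eq, Finset.mem_range]
        have : ∀ i ∈ Finset.range l, (if i ∈ Finset.range l then M2 else 0) = M2 :=
          fun i hi => if_pos hi
        rw [Finset.sum_congr rfl fun i hi => if_pos (by simpa using hi)]
        simp only [Finset.sum_const, Finset.card_range, nsmul_eq_mul]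
        ring

lemma lint_S_sq_ge (hmeas : ∀ n i, Measurable (ξ n i))
    (hindep : ProbabilityTheory.iIndepFun
      (fun p : ℕ × ℕ => ξ p.1 p.2) P)
    {M1 M2 : ℝ≥0∞} (n l : ℕ)
    (he1 : ∀ i, ∫⁻ ω, (ξ n i ω : ℝ≥0∞) ∂P = M1)
    (he2 : ∀ i, ∫⁻ ω, (ξ n i ω : ℝ≥0∞) ^ 2 ∂P = M2)
    (hq : M1 ^ 2 ≤ M2) :
    (l : ℝ≥0∞) ^ 2 * M1 ^ 2
      ≤ ∫⁻ ω, ((∑ i ∈ Finset.range l, ξ n i ω : ℕ) : ℝ≥0∞) ^ 2 ∂P := by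
  rw [lint_S_sq_expand hmeas n l]
  have hbound : ∀ i ∈ Finset.range l, ∀ j ∈ Finset.range l,
      M1 ^ 2 ≤ ∫⁻ ω, (ξ n i ω : ℝ≥0∞) * (ξ n j ω : ℝ≥0∞) ∂P := by
    intro i _ j _
    by_cases hij : i = j
    · subst hij
      have : ∫⁻ ω, (ξ n i ω : ℝ≥0∞) * (ξ n i ω : ℝ≥0∞) ∂P = M2 := by
        rw [← he2 i]; congr 1; ext ω; rw [sq]
      rw [this]; exact hq
    · rw [lint_prod_ne hmeas hindep n he1 hij, ← sq]
  calc (l : ℝ≥0∞) ^ 2 * M1 ^ 2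
      = ∑ _i ∈ Finset.range l, ∑ _j ∈ Finset.range l, M1 ^ 2 := by
        simp only [Finset.sum_const, Finset.card_range, nsmul_eq_mul]; ring
    _ ≤ _ := Finset.sum_le_sum fun i hi => Finset.sum_le_sum fun j hj => hbound i hi j hj

end Sums

end GWAux

namespace GWAux

section Core

open MeasureTheory ProbabilityTheory

variable {Ω : Type*} [MeasurableSpace Ω] {ξ : ℕ → ℕ → Ω → ℕ} {P : Measure Ω}
  [IsProbabilityMeasure P] {Z : ℕ → Ω → ℕ} {M1 M2 : ℝ≥0∞}

lemma step_identity (hmeas : ∀ n i, Measurable (ξ n i))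
    (hindep : iIndepFun (fun p : ℕ × ℕ => ξ p.1 p.2) P)
    (hZ0 : ∀ ω, Z 0 ω = 1)
    (hZsucc : ∀ n ω, Z (n + 1) ω = ∑ i ∈ Finset.range (Z n ω), ξ n i ω)
    (n : ℕ) {C : Set Ω} (hC : MeasurableSet[gwG ξ n] C) (g : ℕ → ℝ≥0∞) :
    ∫⁻ ω in C, g (Z (n + 1) ω) ∂P
      = ∑' l : ℕ, P (C ∩ Z n ⁻¹' {l})
          * ∫⁻ ω, g (∑ i ∈ Finset.range l, ξ n i ω) ∂P := by
  have hZG := measurable_gwG_Z (ξ := ξ) hZ0 hZsucc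
  have hZa : Measurable (Z n) := (hZG n).mono (gwG_le hmeas n) le_rfl
  rw [lintegral_partition (Z n) hZa (gwG_le hmeas n _ hC) (fun ω => g (Z (n + 1) ω))]
  refine tsum_congr fun l => ?_
  have hClG : MeasurableSet[gwG ξ n] (C ∩ Z n ⁻¹' {l}) :=
    hC.inter ((hZG n) (measurableSet_singleton l))
  have hCla : MeasurableSet (C ∩ Z n ⁻¹' {l}) := gwG_le hmeas n _ hClG
  have hae : ∫⁻ ω in C ∩ Z n ⁻¹' {l}, g (Z (n + 1) ω) ∂P
      = ∫⁻ ω in C ∩ Z n ⁻¹' {l}, g (∑ i ∈ Finset.range l, ξ n i ω) ∂P := by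
    refine setLIntegral_congr_fun hCla ?_
    intro ω hω
    simp only [hZsucc n ω, show Z n ω = l from hω.2]
  rw [hae]
  exact lintegral_mul_indep hmeas hindep n hClG
    ((measurable_of_countable g).comp (measurable_gwH_sum (le_refl n)))

lemma value_identity (hmeas : ∀ n i, Measurable (ξ n i))
    (hZ0 : ∀ ω, Z 0 ω = 1)
    (hZsucc : ∀ n ω, Z (n + 1) ω = ∑ i ∈ Finset.range (Z n ω), ξ n i ω)
    (n : ℕ) {C : Set Ω} (hC : MeasurableSet C) (g : ℕ → ℝ≥0∞) :
    ∫⁻ ω in C, g (Z n ω) ∂P = ∑' l : ℕ, P (C ∩ Z n ⁻¹' {l}) * g l :=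
  lintegral_comp_partition (Z n)
    ((measurable_gwG_Z (ξ := ξ) hZ0 hZsucc n).mono (gwG_le hmeas n) le_rfl) hC g

lemma mean_Z (hmeas : ∀ n i, Measurable (ξ n i))
    (hindep : iIndepFun (fun p : ℕ × ℕ => ξ p.1 p.2) P)
    (hZ0 : ∀ ω, Z 0 ω = 1)
    (hZsucc : ∀ n ω, Z (n + 1) ω = ∑ i ∈ Finset.range (Z n ω), ξ n i ω)
    (he1 : ∀ n i, ∫⁻ ω, (ξ n i ω : ℝ≥0∞) ∂P = M1) :
    ∀ n, ∫⁻ ω, (Z n ω : ℝ≥0∞) ∂P = M1 ^ n := by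
  intro n
  induction n with
  | zero => simp [hZ0]
  | succ n ih =>
    have h1 : ∫⁻ ω, (Z (n + 1) ω : ℝ≥0∞) ∂P
        = ∫⁻ ω in Set.univ, (fun k : ℕ => (k : ℝ≥0∞)) (Z (n + 1) ω) ∂P := by
      rw [Measure.restrict_univ]
    rw [h1, step_identity hmeas hindep hZ0 hZsucc n MeasurableSet.univ
      (fun k : ℕ => (k : ℝ≥0∞))]
    have h2 : ∀ l : ℕ, P (Set.univ ∩ Z n ⁻¹' {l})
          * ∫⁻ ω, ((∑ i ∈ Finset.range l, ξ n i ω : ℕ) : ℝ≥0∞) ∂P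
        = (P (Set.univ ∩ Z n ⁻¹' {l}) * (l : ℝ≥0∞)) * M1 := by
      intro l
      rw [lint_S_one hmeas n l (fun i => he1 n i)]
      ring
    calc ∑' l : ℕ, P (Set.univ ∩ Z n ⁻¹' {l})
          * ∫⁻ ω, ((∑ i ∈ Finset.range l, ξ n i ω : ℕ) : ℝ≥0∞) ∂P
        = ∑' l : ℕ, (P (Set.univ ∩ Z n ⁻¹' {l}) * (l : ℝ≥0∞)) * M1 := tsum_congr h2
      _ = (∑' l : ℕ, P (Set.univ ∩ Z n ⁻¹' {l}) * (l : ℝ≥0∞)) * M1 :=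
          ENNReal.tsum_mul_right
      _ = (∫⁻ ω in Set.univ, (fun k : ℕ => (k : ℝ≥0∞)) (Z n ω) ∂P) * M1 := by
          rw [value_identity hmeas hZ0 hZsucc n MeasurableSet.univ]
      _ = M1 ^ (n + 1) := by
          rw [Measure.restrict_univ]
          rw [show (∫⁻ ω, ((Z n ω : ℕ) : ℝ≥0∞) ∂P) = M1 ^ n from ih]
          ring

lemma sq_Z_bound (hmeas : ∀ n i, Measurable (ξ n i))
    (hindep : iIndepFun (fun p : ℕ × ℕ => ξ p.1 p.2) P)
    (hZ0 : ∀ ω, Z 0 ω = 1)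
    (hZsucc : ∀ n ω, Z (n + 1) ω = ∑ i ∈ Finset.range (Z n ω), ξ n i ω)
    (he1 : ∀ n i, ∫⁻ ω, (ξ n i ω : ℝ≥0∞) ∂P = M1)
    (he2 : ∀ n i, ∫⁻ ω, (ξ n i ω : ℝ≥0∞) ^ 2 ∂P = M2) :
    ∀ n, (∫⁻ ω, (Z n ω : ℝ≥0∞) ^ 2 ∂P) * M1
      ≤ M1 ^ (2 * n + 1) + M2 * ∑ j ∈ Finset.range n, M1 ^ (n + j) := by
  intro n
  induction n with
  | zero => simp [hZ0]
  | succ n ih =>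
    have hrec : ∫⁻ ω, (Z (n + 1) ω : ℝ≥0∞) ^ 2 ∂P
        ≤ M1 ^ 2 * ∫⁻ ω, (Z n ω : ℝ≥0∞) ^ 2 ∂P + M2 * M1 ^ n := by
      have h1 : ∫⁻ ω, (Z (n + 1) ω : ℝ≥0∞) ^ 2 ∂P
          = ∫⁻ ω in Set.univ, (fun k : ℕ => (k : ℝ≥0∞) ^ 2) (Z (n + 1) ω) ∂P := by
        rw [Measure.restrict_univ]
      rw [h1, step_identity hmeas hindep hZ0 hZsucc n MeasurableSet.univ
        (fun k : ℕ => (k : ℝ≥0∞) ^ 2)]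
      have h2 : ∀ l : ℕ, P (Set.univ ∩ Z n ⁻¹' {l})
            * ∫⁻ ω, ((∑ i ∈ Finset.range l, ξ n i ω : ℕ) : ℝ≥0∞) ^ 2 ∂P
          ≤ P (Set.univ ∩ Z n ⁻¹' {l}) * ((l : ℝ≥0∞) * M2 + (l : ℝ≥0∞) ^ 2 * M1 ^ 2) :=
        fun l => mul_le_mul_right (lint_S_sq_le hmeas hindep n l
          (fun i => he1 n i) (fun i => he2 n i)) _
      calc ∑' l : ℕ, P (Set.univ ∩ Z n ⁻¹' {l})
            * ∫⁻ ω, ((∑ i ∈ Finset.range l, ξ n i ω : ℕ) : ℝ≥0∞) ^ 2 ∂P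
          ≤ ∑' l : ℕ, P (Set.univ ∩ Z n ⁻¹' {l})
              * ((l : ℝ≥0∞) * M2 + (l : ℝ≥0∞) ^ 2 * M1 ^ 2) := ENNReal.tsum_le_tsum h2
        _ = (∑' l : ℕ, P (Set.univ ∩ Z n ⁻¹' {l}) * (l : ℝ≥0∞)) * M2
            + (∑' l : ℕ, P (Set.univ ∩ Z n ⁻¹' {l}) * (l : ℝ≥0∞) ^ 2) * M1 ^ 2 := by
            rw [← ENNReal.tsum_mul_right, ← ENNReal.tsum_mul_right, ← ENNReal.tsum_add]
            refine tsum_congr fun l => ?_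
            ring
        _ = M1 ^ n * M2 + (∫⁻ ω, (Z n ω : ℝ≥0∞) ^ 2 ∂P) * M1 ^ 2 := by
            have hv1 := value_identity (P := P) (Z := Z) hmeas hZ0 hZsucc n
              MeasurableSet.univ (fun k : ℕ => (k : ℝ≥0∞))
            have hv2 := value_identity (P := P) (Z := Z) hmeas hZ0 hZsucc n
              MeasurableSet.univ (fun k : ℕ => (k : ℝ≥0∞) ^ 2)
            rw [Measure.restrict_univ] at hv1 hv2
            rw [← hv1, ← hv2, mean_Z hmeas hindep hZ0 hZsucc he1]
        _ = M1 ^ 2 * ∫⁻ ω, (Z n ω : ℝ≥0∞) ^ 2 ∂P + M2 * M1 ^ n := by ring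
    calc (∫⁻ ω, (Z (n + 1) ω : ℝ≥0∞) ^ 2 ∂P) * M1
        ≤ (M1 ^ 2 * ∫⁻ ω, (Z n ω : ℝ≥0∞) ^ 2 ∂P + M2 * M1 ^ n) * M1 :=
          mul_le_mul_left hrec _
      _ = M1 ^ 2 * ((∫⁻ ω, (Z n ω : ℝ≥0∞) ^ 2 ∂P) * M1) + M2 * M1 ^ (n + 1) := by ring
      _ ≤ M1 ^ 2 * (M1 ^ (2 * n + 1) + M2 * ∑ j ∈ Finset.range n, M1 ^ (n + j))
            + M2 * M1 ^ (n + 1) := by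
          exact add_le_add_left (mul_le_mul_right ih _) _
      _ = M1 ^ (2 * (n + 1) + 1)
            + M2 * ∑ j ∈ Finset.range (n + 1), M1 ^ (n + 1 + j) := by
          have hs' : ∑ j ∈ Finset.range n, M1 ^ 2 * (M2 * M1 ^ (n + j))
              = ∑ j ∈ Finset.range n, M2 * M1 ^ (n + 1 + (j + 1)) :=
            Finset.sum_congr rfl fun j _ => by ring
          rw [Finset.sum_range_succ' (fun j => M1 ^ (n + 1 + j)) n]
          simp only [mul_add, Finset.mul_sum]
          rw [hs']
          ring

lemma mart_lower (hmeas : ∀ n i, Measurable (ξ n i))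
    (hindep : iIndepFun (fun p : ℕ × ℕ => ξ p.1 p.2) P)
    (hZ0 : ∀ ω, Z 0 ω = 1)
    (hZsucc : ∀ n ω, Z (n + 1) ω = ∑ i ∈ Finset.range (Z n ω), ξ n i ω)
    (he1 : ∀ n i, ∫⁻ ω, (ξ n i ω : ℝ≥0∞) ∂P = M1)
    (he2 : ∀ n i, ∫⁻ ω, (ξ n i ω : ℝ≥0∞) ^ 2 ∂P = M2)
    (hq : M1 ^ 2 ≤ M2)
    (k : ℕ) {C : Set Ω} (hC : MeasurableSet[gwG ξ k] C) :
    ∀ r : ℕ, (M1 ^ 2) ^ r * ∫⁻ ω in C, (Z k ω : ℝ≥0∞) ^ 2 ∂P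
      ≤ ∫⁻ ω in C, (Z (k + r) ω : ℝ≥0∞) ^ 2 ∂P := by
  intro r
  induction r with
  | zero => simp
  | succ r ih =>
    have hCr : MeasurableSet[gwG ξ (k + r)] C :=
      gwG_mono (ξ := ξ) (Nat.le_add_right k r) _ hC
    have hstep : M1 ^ 2 * ∫⁻ ω in C, (Z (k + r) ω : ℝ≥0∞) ^ 2 ∂P
        ≤ ∫⁻ ω in C, (Z (k + r + 1) ω : ℝ≥0∞) ^ 2 ∂P := by
      have h1 : ∫⁻ ω in C, (Z (k + r + 1) ω : ℝ≥0∞) ^ 2 ∂P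
          = ∫⁻ ω in C, (fun j : ℕ => (j : ℝ≥0∞) ^ 2) (Z (k + r + 1) ω) ∂P := rfl
      rw [h1, step_identity hmeas hindep hZ0 hZsucc (k + r) hCr
        (fun j : ℕ => (j : ℝ≥0∞) ^ 2)]
      have h2 : ∀ l : ℕ, P (C ∩ Z (k + r) ⁻¹' {l}) * ((l : ℝ≥0∞) ^ 2 * M1 ^ 2)
          ≤ P (C ∩ Z (k + r) ⁻¹' {l})
            * ∫⁻ ω, ((∑ i ∈ Finset.range l, ξ (k + r) i ω : ℕ) : ℝ≥0∞) ^ 2 ∂P :=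
        fun l => mul_le_mul_right (lint_S_sq_ge hmeas hindep (k + r) l
          (fun i => he1 (k + r) i) (fun i => he2 (k + r) i) hq) _
      calc M1 ^ 2 * ∫⁻ ω in C, (Z (k + r) ω : ℝ≥0∞) ^ 2 ∂P
          = M1 ^ 2 * ∑' l : ℕ, P (C ∩ Z (k + r) ⁻¹' {l}) * (l : ℝ≥0∞) ^ 2 := by
            rw [value_identity (P := P) (Z := Z) hmeas hZ0 hZsucc (k + r)
              (gwG_le hmeas (k + r) _ hCr) (fun j : ℕ => (j : ℝ≥0∞) ^ 2)]
        _ = ∑' l : ℕ, P (C ∩ Z (k + r) ⁻¹' {l}) * ((l : ℝ≥0∞) ^ 2 * M1 ^ 2) := by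
            rw [← ENNReal.tsum_mul_left]
            refine tsum_congr fun l => ?_
            ring
        _ ≤ _ := ENNReal.tsum_le_tsum h2
    calc (M1 ^ 2) ^ (r + 1) * ∫⁻ ω in C, (Z k ω : ℝ≥0∞) ^ 2 ∂P
        = M1 ^ 2 * ((M1 ^ 2) ^ r * ∫⁻ ω in C, (Z k ω : ℝ≥0∞) ^ 2 ∂P) := by ring
      _ ≤ M1 ^ 2 * ∫⁻ ω in C, (Z (k + r) ω : ℝ≥0∞) ^ 2 ∂P := mul_le_mul_right ih _
      _ ≤ ∫⁻ ω in C, (Z (k + r + 1) ω : ℝ≥0∞) ^ 2 ∂P := hstep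

end Core

end GWAux

namespace GWAux

lemma real_bound (d : ℕ) {m q2 : ℝ} (hm : 1 < m) (hq0 : 0 ≤ q2) (hq : q2 ≤ d * m) (n : ℕ) :
    m ^ (2 * n + 1) + q2 * ∑ j ∈ Finset.range n, m ^ (n + j)
      ≤ m ^ (2 * n + 1) * (1 + (d : ℝ) / (m - 1)) := by
  have hm0 : (0 : ℝ) < m := lt_trans one_pos hm
  have hm1 : (0 : ℝ) < m - 1 := sub_pos.2 hm
  have h1n : (1 : ℝ) ≤ m ^ n := one_le_pow₀ hm.le
  have hgs : ∑ j ∈ Finset.range n, m ^ (n + j) = m ^ n * ((m ^ n - 1) / (m - 1)) := by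
    rw [← geom_sum_eq (ne_of_gt hm) n, Finset.mul_sum]
    exact Finset.sum_congr rfl fun j _ => pow_add m n j
  rw [hgs, mul_add, mul_one]
  refine add_le_add_right ?_ _
  have hdiv : (m ^ n - 1) / (m - 1) ≤ m ^ n / (m - 1) := by gcongr; linarith
  have hinner : m ^ n * ((m ^ n - 1) / (m - 1)) ≤ m ^ n * (m ^ n / (m - 1)) :=
    mul_le_mul_of_nonneg_left hdiv (by positivity)
  calc q2 * (m ^ n * ((m ^ n - 1) / (m - 1)))
      ≤ (d * m) * (m ^ n * (m ^ n / (m - 1))) := by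
        refine mul_le_mul hq hinner ?_ (by positivity)
        exact mul_nonneg (by positivity) (div_nonneg (by linarith) hm1.le)
    _ = m ^ (2 * n + 1) * ((d : ℝ) / (m - 1)) := by
        field_simp
        ring

end GWAux

open MeasureTheory ProbabilityTheory Set Filter Topology in
/-- For every real x > 0, P(sup_{n ∈ ℕ} W_n ≥ x) ≤ (1 + d/(m−1)) · x^{−2}.
(The supremum is taken in ℝ≥0∞ via ENNReal.ofReal, which is faithful since W_n ≥ 0.) -/
theorem gw_sup_maximal_inequality
    {Ω : Type*} [MeasurableSpace Ω] (P : MeasureTheory.Measure Ω)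
    [MeasureTheory.IsProbabilityMeasure P]
    (d : ℕ) (hd : 2 ≤ d) (m : ℝ) (hm : 1 < m)
    (μ : MeasureTheory.Measure ℕ) [MeasureTheory.IsProbabilityMeasure μ]
    (hsupp : ∀ k : ℕ, d < k → μ {k} = 0)
    (hmean : ∑' k : ℕ, (k : ℝ) * (μ {k}).toReal = m)
    (ξ : ℕ → ℕ → Ω → ℕ)
    (hmeas : ∀ n i, Measurable (ξ n i))
    (hlaw : ∀ n i, MeasureTheory.Measure.map (ξ n i) P = μ)
    (hindep : ProbabilityTheory.iIndepFun
      (fun p : ℕ × ℕ => ξ p.1 p.2) P)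
    (Z : ℕ → Ω → ℕ) (hZ0 : ∀ ω, Z 0 ω = 1)
    (hZsucc : ∀ n ω, Z (n + 1) ω = ∑ i ∈ Finset.range (Z n ω), ξ n i ω)
    (W : ℕ → Ω → ℝ) (hW : ∀ n ω, W n ω = (Z n ω : ℝ) / m ^ n)
    (x : ℝ) (hx : 0 < x) :
    P {ω | ENNReal.ofReal x ≤ ⨆ n, ENNReal.ofReal (W n ω)} ≤
      ENNReal.ofReal ((1 + (d : ℝ) / (m - 1)) / x ^ 2) := by
  classical
  have hm0 : (0 : ℝ) < m := lt_trans one_pos hm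
  have hm1 : (0 : ℝ) < m - 1 := sub_pos.2 hm
  set q2 : ℝ := ∑ k ∈ Finset.range (d + 1), (k : ℝ) ^ 2 * (μ {k}).toReal with hq2def
  have hq20 : 0 ≤ q2 :=
    Finset.sum_nonneg fun k _ => mul_nonneg (sq_nonneg _) ENNReal.toReal_nonneg
  have hq2d : q2 ≤ d * m := GWAux.q2_le_dm μ hsupp hmean
  have hq2m : m ^ 2 ≤ q2 := GWAux.m_sq_le_q2 μ hsupp hmean
  have he1 : ∀ n i, ∫⁻ ω, (ξ n i ω : ℝ≥0∞) ∂P = ENNReal.ofReal m :=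
    fun n i => GWAux.lint_xi_one (hmeas n i) (hlaw n i) hsupp hmean
  have he2 : ∀ n i, ∫⁻ ω, (ξ n i ω : ℝ≥0∞) ^ 2 ∂P = ENNReal.ofReal q2 :=
    fun n i => GWAux.lint_xi_sq (hmeas n i) (hlaw n i) hsupp
  have hq : (ENNReal.ofReal m) ^ 2 ≤ ENNReal.ofReal q2 := by
    rw [← ENNReal.ofReal_pow hm0.le]
    exact ENNReal.ofReal_le_ofReal hq2m
  set K : ℝ := 1 + (d : ℝ) / (m - 1) with hKdef
  have hK0 : 0 ≤ K := by positivity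
  have hMne0 : (ENNReal.ofReal m : ℝ≥0∞) ≠ 0 := by
    simp [ENNReal.ofReal_eq_zero, not_le, hm0]
  have hMneT : (ENNReal.ofReal m : ℝ≥0∞) ≠ ⊤ := ENNReal.ofReal_ne_top
  -- Doob-type maximal inequality at finite horizon
  have hDoob : ∀ y : ℝ, 0 < y → ∀ n : ℕ,
      P {ω | ∃ k, k ≤ n ∧ y ≤ W k ω} ≤ ENNReal.ofReal (K / y ^ 2) := by
    intro y hy n
    set A : ℕ → Set Ω := fun k => {ω | y ≤ W k ω ∧ ∀ j, j < k → W j ω < y} with hAdef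
    have hZG := GWAux.measurable_gwG_Z (ξ := ξ) hZ0 hZsucc
    have hWset : ∀ (k : ℕ) (s : Set ℝ), MeasurableSet[GWAux.gwG ξ k] {ω | W k ω ∈ s} := by
      intro k s
      have hrw : {ω | W k ω ∈ s} = Z k ⁻¹' {j : ℕ | (j : ℝ) / m ^ k ∈ s} := by
        ext ω; simp [hW]
      rw [hrw]
      exact hZG k MeasurableSpace.measurableSet_top
    have hAG : ∀ k, MeasurableSet[GWAux.gwG ξ k] (A k) := by
      intro k
      have hrw : A k = {ω | W k ω ∈ Ici y}
          ∩ ⋂ j ∈ Finset.range k, {ω | W j ω ∈ Iio y} := by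
        ext ω
        simp only [hAdef, mem_setOf_eq, mem_inter_iff, mem_iInter, Finset.mem_range,
          Set.mem_Ici, Set.mem_Iio]
      rw [hrw]
      refine (hWset k _).inter (Finset.measurableSet_biInter _ fun j hj => ?_)
      exact GWAux.gwG_mono (le_of_lt (Finset.mem_range.1 hj)) _ (hWset j _)
    have hAa : ∀ k, MeasurableSet (A k) := fun k => GWAux.gwG_le hmeas k _ (hAG k)
    have hdisj : Set.PairwiseDisjoint ↑(Finset.range (n + 1)) A := by
      intro a _ b _ hab
      refine Set.disjoint_left.2 fun ω hωa hωb => ?_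
      rcases lt_or_gt_of_ne hab with h | h
      · exact absurd hωa.1 (not_le.2 (hωb.2 a h))
      · exact absurd hωb.1 (not_le.2 (hωa.2 b h))
    have hE : {ω | ∃ k, k ≤ n ∧ y ≤ W k ω} = ⋃ k ∈ Finset.range (n + 1), A k := by
      ext ω
      simp only [mem_setOf_eq, mem_iUnion, Finset.mem_range, exists_prop]
      constructor
      · rintro ⟨k, hk, hyk⟩
        have hex : ∃ j, y ≤ W j ω := ⟨k, hyk⟩
        refine ⟨Nat.find hex, Nat.lt_succ_of_le (le_trans (Nat.find_min' hex hyk) hk),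
          Nat.find_spec hex, fun j hj => not_le.1 (Nat.find_min hex hj)⟩
      · rintro ⟨k, hk, hωk⟩
        exact ⟨k, Nat.lt_succ_iff.1 hk, hωk.1⟩
    have hkey : ∀ k ∈ Finset.range (n + 1),
        (ENNReal.ofReal y) ^ 2 * (ENNReal.ofReal m) ^ (2 * n) * P (A k)
          ≤ ∫⁻ ω in A k, (Z n ω : ℝ≥0∞) ^ 2 ∂P := by
      intro k hk
      have hkn : k ≤ n := Nat.lt_succ_iff.1 (Finset.mem_range.1 hk)
      have hlow : ∀ ω ∈ A k,
          (ENNReal.ofReal y) ^ 2 * (ENNReal.ofReal m) ^ (2 * k)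
            ≤ (Z k ω : ℝ≥0∞) ^ 2 := by
        intro ω hω
        have h1 : y * m ^ k ≤ (Z k ω : ℝ) := by
          have h := hω.1
          rw [hW, le_div_iff₀ (pow_pos hm0 k)] at h
          exact h
        have h2 : ENNReal.ofReal (y * m ^ k) ≤ (Z k ω : ℝ≥0∞) := by
          rw [← ENNReal.ofReal_natCast (Z k ω)]
          exact ENNReal.ofReal_le_ofReal h1
        calc (ENNReal.ofReal y) ^ 2 * (ENNReal.ofReal m) ^ (2 * k)
            = (ENNReal.ofReal (y * m ^ k)) ^ 2 := by
              rw [ENNReal.ofReal_mul hy.le, ENNReal.ofReal_pow hm0.le]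
              ring
          _ ≤ (Z k ω : ℝ≥0∞) ^ 2 := pow_le_pow_left' h2 2
      have hstep1 : (ENNReal.ofReal y) ^ 2 * (ENNReal.ofReal m) ^ (2 * k) * P (A k)
          ≤ ∫⁻ ω in A k, (Z k ω : ℝ≥0∞) ^ 2 ∂P := by
        rw [← setLIntegral_const (A k) ((ENNReal.ofReal y) ^ 2 * (ENNReal.ofReal m) ^ (2 * k))]
        exact setLIntegral_mono' (hAa k) hlow
      have hmart := GWAux.mart_lower hmeas hindep hZ0 hZsucc he1 he2 hq k (hAG k) (n - k)
      rw [Nat.add_sub_cancel' hkn] at hmart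
      have hexp : ((ENNReal.ofReal m) ^ 2) ^ (n - k) * (ENNReal.ofReal m) ^ (2 * k)
          = (ENNReal.ofReal m) ^ (2 * n) := by
        rw [← pow_mul, ← pow_add]
        congr 1
        omega
      calc (ENNReal.ofReal y) ^ 2 * (ENNReal.ofReal m) ^ (2 * n) * P (A k)
          = ((ENNReal.ofReal m) ^ 2) ^ (n - k)
              * ((ENNReal.ofReal y) ^ 2 * (ENNReal.ofReal m) ^ (2 * k) * P (A k)) := by
            rw [← hexp]; ring
        _ ≤ ((ENNReal.ofReal m) ^ 2) ^ (n - k) * ∫⁻ ω in A k, (Z k ω : ℝ≥0∞) ^ 2 ∂P :=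
            mul_le_mul_right hstep1 _
        _ ≤ ∫⁻ ω in A k, (Z n ω : ℝ≥0∞) ^ 2 ∂P := hmart
    have hsum : (ENNReal.ofReal y) ^ 2 * (ENNReal.ofReal m) ^ (2 * n)
          * P {ω | ∃ k, k ≤ n ∧ y ≤ W k ω}
        ≤ ∫⁻ ω, (Z n ω : ℝ≥0∞) ^ 2 ∂P := by
      rw [hE, measure_biUnion_finset hdisj fun k _ => hAa k, Finset.mul_sum]
      calc ∑ k ∈ Finset.range (n + 1),
            (ENNReal.ofReal y) ^ 2 * (ENNReal.ofReal m) ^ (2 * n) * P (A k)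
          ≤ ∑ k ∈ Finset.range (n + 1), ∫⁻ ω in A k, (Z n ω : ℝ≥0∞) ^ 2 ∂P :=
            Finset.sum_le_sum hkey
        _ = ∫⁻ ω in ⋃ k ∈ Finset.range (n + 1), A k, (Z n ω : ℝ≥0∞) ^ 2 ∂P :=
            (lintegral_biUnion_finset hdisj (fun k _ => hAa k) _).symm
        _ ≤ ∫⁻ ω, (Z n ω : ℝ≥0∞) ^ 2 ∂P := setLIntegral_le_lintegral _ _
    have hZ2 := GWAux.sq_Z_bound hmeas hindep hZ0 hZsucc he1 he2 n
    have hofsum : (ENNReal.ofReal m) ^ (2 * n + 1)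
          + ENNReal.ofReal q2 * ∑ j ∈ Finset.range n, (ENNReal.ofReal m) ^ (n + j)
        = ENNReal.ofReal (m ^ (2 * n + 1)
            + q2 * ∑ j ∈ Finset.range n, m ^ (n + j)) := by
      have h1 : ∀ j ∈ Finset.range n, (ENNReal.ofReal m) ^ (n + j)
          = ENNReal.ofReal (m ^ (n + j)) :=
        fun j _ => (ENNReal.ofReal_pow hm0.le _).symm
      rw [Finset.sum_congr rfl h1,
        ← ENNReal.ofReal_sum_of_nonneg (fun j _ => by positivity),
        ← ENNReal.ofReal_mul hq20, ← ENNReal.ofReal_pow hm0.le,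
        ← ENNReal.ofReal_add (by positivity)
          (mul_nonneg hq20 (Finset.sum_nonneg fun j _ => by positivity))]
    have hbound : (∫⁻ ω, (Z n ω : ℝ≥0∞) ^ 2 ∂P) * ENNReal.ofReal m
        ≤ (ENNReal.ofReal m) ^ (2 * n + 1) * ENNReal.ofReal K := by
      calc (∫⁻ ω, (Z n ω : ℝ≥0∞) ^ 2 ∂P) * ENNReal.ofReal m
          ≤ (ENNReal.ofReal m) ^ (2 * n + 1)
              + ENNReal.ofReal q2 * ∑ j ∈ Finset.range n, (ENNReal.ofReal m) ^ (n + j) := hZ2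
        _ = ENNReal.ofReal (m ^ (2 * n + 1) + q2 * ∑ j ∈ Finset.range n, m ^ (n + j)) :=
            hofsum
        _ ≤ ENNReal.ofReal (m ^ (2 * n + 1) * K) :=
            ENNReal.ofReal_le_ofReal (GWAux.real_bound d hm hq20 hq2d n)
        _ = (ENNReal.ofReal m) ^ (2 * n + 1) * ENNReal.ofReal K := by
            rw [ENNReal.ofReal_mul (by positivity), ENNReal.ofReal_pow hm0.le]
    have hcancel : (ENNReal.ofReal y) ^ 2 * P {ω | ∃ k, k ≤ n ∧ y ≤ W k ω}
        ≤ ENNReal.ofReal K := by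
      have hc0 : ((ENNReal.ofReal m) ^ (2 * n + 1) : ℝ≥0∞) ≠ 0 := pow_ne_zero _ hMne0
      have hcT : ((ENNReal.ofReal m) ^ (2 * n + 1) : ℝ≥0∞) ≠ ⊤ := by
        exact ENNReal.pow_ne_top hMneT
      refine (ENNReal.mul_le_mul_iff_right hc0 hcT).1 ?_
      calc (ENNReal.ofReal m) ^ (2 * n + 1)
            * ((ENNReal.ofReal y) ^ 2 * P {ω | ∃ k, k ≤ n ∧ y ≤ W k ω})
          = ((ENNReal.ofReal y) ^ 2 * (ENNReal.ofReal m) ^ (2 * n)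
              * P {ω | ∃ k, k ≤ n ∧ y ≤ W k ω}) * ENNReal.ofReal m := by ring
        _ ≤ (∫⁻ ω, (Z n ω : ℝ≥0∞) ^ 2 ∂P) * ENNReal.ofReal m := mul_le_mul_left hsum _
        _ ≤ (ENNReal.ofReal m) ^ (2 * n + 1) * ENNReal.ofReal K := hbound
    rw [show ENNReal.ofReal (K / y ^ 2) = ENNReal.ofReal K / ENNReal.ofReal (y ^ 2) from
      ENNReal.ofReal_div_of_pos (by positivity)]
    rw [ENNReal.le_div_iff_mul_le (Or.inl (by simp [ENNReal.ofReal_eq_zero, not_le]; positivity))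
      (Or.inl ENNReal.ofReal_ne_top)]
    rw [← ENNReal.ofReal_pow hy.le] at hcancel
    rw [mul_comm]
    exact hcancel
  -- pass to the limit
  have hmonob : ∀ y : ℝ, 0 < y → y < x →
      P {ω | ENNReal.ofReal x ≤ ⨆ n, ENNReal.ofReal (W n ω)} ≤ ENNReal.ofReal (K / y ^ 2) := by
    intro y hy hyx
    have hsub : {ω | ENNReal.ofReal x ≤ ⨆ n, ENNReal.ofReal (W n ω)}
        ⊆ ⋃ n, {ω | ∃ k, k ≤ n ∧ y ≤ W k ω} := by
      intro ω hω
      have h1 : ENNReal.ofReal y < ⨆ n, ENNReal.ofReal (W n ω) :=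
        lt_of_lt_of_le ((ENNReal.ofReal_lt_ofReal_iff hx).2 hyx) hω
      obtain ⟨n, hn⟩ := lt_iSup_iff.1 h1
      have h2 : y ≤ W n ω := by
        by_contra h
        exact absurd (ENNReal.ofReal_le_ofReal (le_of_not_ge h)) (not_le.2 hn)
      exact mem_iUnion.2 ⟨n, ⟨n, le_refl n, h2⟩⟩
    have hdir : Directed (· ⊆ ·) (fun n : ℕ => {ω | ∃ k, k ≤ n ∧ y ≤ W k ω}) := by
      refine Monotone.directed_le fun a b hab => ?_
      rintro ω ⟨k, hk, hωk⟩
      exact ⟨k, le_trans hk hab, hωk⟩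
    calc P {ω | ENNReal.ofReal x ≤ ⨆ n, ENNReal.ofReal (W n ω)}
        ≤ P (⋃ n, {ω | ∃ k, k ≤ n ∧ y ≤ W k ω}) := measure_mono hsub
      _ = ⨆ n, P {ω | ∃ k, k ≤ n ∧ y ≤ W k ω} := hdir.measure_iUnion
      _ ≤ ENNReal.ofReal (K / y ^ 2) := iSup_le fun n => hDoob y hy n
  have hcont : ContinuousAt (fun y : ℝ => K / y ^ 2) x :=
    ContinuousAt.div continuousAt_const ((continuous_pow 2).continuousAt) (by positivity)
  have htend : Tendsto (fun y : ℝ => ENNReal.ofReal (K / y ^ 2)) (𝓝[<] x)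
      (𝓝 (ENNReal.ofReal (K / x ^ 2))) :=
    (ENNReal.continuous_ofReal.continuousAt.comp hcont).continuousWithinAt
  have hev : ∀ᶠ y in 𝓝[<] x,
      P {ω | ENNReal.ofReal x ≤ ⨆ n, ENNReal.ofReal (W n ω)} ≤ ENNReal.ofReal (K / y ^ 2) := by
    filter_upwards [Ioo_mem_nhdsLT_of_mem (show x ∈ Ioc 0 x from ⟨hx, le_refl x⟩)] with y hy
    exact hmonob y hy.1 hy.2
  exact ge_of_tendsto htend hev
end

section
/- For every k ∈ ℕ and every p ∈ [0,1), the binomial distribution Bin(k, p) is stochastically dominated by the Poisson distribution Pois(k·p/(1−p)); that is, for every j ∈ ℕ, P(X ≥ j) ≤ P(Y ≥ j) where X has distribution Bin(k,p) and Y has distribution Pois(k·p/(1−p)). -/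
open Finset Real

namespace BPD

noncomputable def poisM (μ : ℝ) (i : ℕ) : ℝ := Real.exp (-μ) * μ ^ i / (Nat.factorial i : ℝ)

def binM (p : ℝ) (k i : ℕ) : ℝ := (k.choose i : ℝ) * p ^ i * (1 - p) ^ (k - i)

noncomputable def HP (μ : ℝ) (j : ℕ) : ℝ := ∑ i ∈ range j, poisM μ i

noncomputable def HB (p : ℝ) (k j : ℕ) : ℝ := ∑ i ∈ range j, binM p k i

lemma poisM_nonneg {μ : ℝ} (hμ : 0 ≤ μ) (i : ℕ) : 0 ≤ poisM μ i := by
  unfold poisM; positivity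

lemma binM_nonneg {p : ℝ} (hp0 : 0 ≤ p) (hp1 : p ≤ 1) (k i : ℕ) : 0 ≤ binM p k i := by
  unfold binM
  have : 0 ≤ 1 - p := by linarith
  positivity

lemma HP_le_one {μ : ℝ} (hμ : 0 ≤ μ) (j : ℕ) : HP μ j ≤ 1 := by
  have h := Real.sum_le_exp_of_nonneg hμ j
  have he : HP μ j = Real.exp (-μ) * ∑ i ∈ range j, μ ^ i / (Nat.factorial i : ℝ) := by
    simp [HP, poisM, Finset.mul_sum, mul_div_assoc]
  rw [he]
  calc Real.exp (-μ) * ∑ i ∈ range j, μ ^ i / (Nat.factorial i : ℝ)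
      ≤ Real.exp (-μ) * Real.exp μ :=
        mul_le_mul_of_nonneg_left h (Real.exp_pos _).le
    _ = 1 := by rw [← Real.exp_add]; simp

lemma HP_nonneg {μ : ℝ} (hμ : 0 ≤ μ) (j : ℕ) : 0 ≤ HP μ j :=
  Finset.sum_nonneg fun i _ => poisM_nonneg hμ i

lemma head_conv (f g : ℕ → ℝ) (j : ℕ) :
    ∑ i ∈ range j, ∑ a ∈ range (i + 1), f a * g (i - a)
      = ∑ a ∈ range j, f a * ∑ b ∈ range (j - a), g b := by
  induction j with
  | zero => simp
  | succ n ih =>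
    rw [Finset.sum_range_succ, ih, Finset.sum_range_succ]
    have h1 : ∀ a ∈ range n, f a * ∑ b ∈ range (n + 1 - a), g b
        = f a * ∑ b ∈ range (n - a), g b + f a * g (n - a) := by
      intro a ha
      simp only [Finset.mem_range] at ha
      have h : n + 1 - a = (n - a) + 1 := by omega
      rw [h, Finset.sum_range_succ, mul_add]
    rw [Finset.sum_range_succ (fun a => f a * ∑ b ∈ range (n + 1 - a), g b) n,
      Finset.sum_congr rfl h1, Finset.sum_add_distrib]
    have h2 : n + 1 - n = 1 := by omega
    rw [h2, Finset.sum_range_one]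
    simp only [Nat.sub_self]
    ring

lemma conv_comm (f g : ℕ → ℝ) (i : ℕ) :
    ∑ a ∈ range (i + 1), f a * g (i - a) = ∑ a ∈ range (i + 1), g a * f (i - a) := by
  rw [← Finset.sum_range_reflect (fun a => g a * f (i - a)) (i + 1)]
  apply Finset.sum_congr rfl
  intro a ha
  simp only [Finset.mem_range] at ha
  have h1 : i + 1 - 1 - a = i - a := by omega
  have h2 : i - (i - a) = a := by omega
  rw [h1, h2, mul_comm]

lemma pois_conv (μ ν : ℝ) (n : ℕ) :
    poisM (μ + ν) n = ∑ a ∈ range (n + 1), poisM μ a * poisM ν (n - a) := by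
  unfold poisM
  rw [show Real.exp (-(μ + ν)) = Real.exp (-μ) * Real.exp (-ν) by
    rw [← Real.exp_add]; ring_nf]
  rw [add_pow, Finset.mul_sum, Finset.sum_div]
  apply Finset.sum_congr rfl
  intro a ha
  simp only [Finset.mem_range] at ha
  have ha' : a ≤ n := by omega
  have hfac : (Nat.factorial n : ℝ) = (n.choose a : ℝ) * (Nat.factorial a : ℝ) * (Nat.factorial (n - a) : ℝ) := by
    exact_mod_cast (Nat.choose_mul_factorial_mul_factorial ha').symm
  have h1 : (Nat.factorial a : ℝ) ≠ 0 := by exact_mod_cast (Nat.factorial_pos a).ne'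
  have h2 : (Nat.factorial (n - a) : ℝ) ≠ 0 := by exact_mod_cast (Nat.factorial_pos (n - a)).ne'
  have h3 : (Nat.factorial n : ℝ) ≠ 0 := by exact_mod_cast (Nat.factorial_pos n).ne'
  field_simp
  rw [hfac]
  ring

lemma binM_zero (p : ℝ) (k : ℕ) : binM p (k + 1) 0 = (1 - p) * binM p k 0 := by
  simp [binM, pow_succ]; ring

lemma binM_succ (p : ℝ) (k i : ℕ) :
    binM p (k + 1) (i + 1) = (1 - p) * binM p k (i + 1) + p * binM p k i := by
  unfold binM
  rcases lt_or_ge i k with h | h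
  · have h1 : k + 1 - (i + 1) = (k - (i + 1)) + 1 := by omega
    have h2 : k - i = (k - (i + 1)) + 1 := by omega
    rw [Nat.choose_succ_succ, h1, h2]
    push_cast
    ring
  · rcases eq_or_lt_of_le h with rfl | h'
    · simp [Nat.choose_succ_succ, Nat.choose_self, Nat.choose_succ_self]
      ring
    · have ha : k + 1 < i + 1 := by omega
      have hb : k < i + 1 := by omega
      have hc : k < i := by omega
      rw [Nat.choose_eq_zero_of_lt ha, Nat.choose_eq_zero_of_lt hb, Nat.choose_eq_zero_of_lt hc]
      simp

lemma HB_succ (p : ℝ) (k j : ℕ) :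
    HB p (k + 1) j = (1 - p) * HB p k j + p * HB p k (j - 1) := by
  induction j with
  | zero => simp [HB]
  | succ n ih =>
    unfold HB at *
    rw [Finset.sum_range_succ, ih]
    cases n with
    | zero =>
      simp only [zero_add, Nat.add_sub_cancel, Finset.sum_range_zero, Finset.sum_range_one,
        Nat.zero_sub, binM_zero]
      ring
    | succ m =>
      simp only [Nat.add_sub_cancel] at *
      rw [binM_succ]
      rw [Finset.sum_range_succ (f := binM p k) (n := m + 1),
        Finset.sum_range_succ (f := binM p k) (n := m)]
      ring

lemma HP_add (μ ν : ℝ) (j : ℕ) :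
    HP (μ + ν) j = ∑ a ∈ range j, poisM ν a * HP μ (j - a) := by
  unfold HP
  calc ∑ i ∈ range j, poisM (μ + ν) i
      = ∑ i ∈ range j, ∑ a ∈ range (i + 1), poisM ν a * poisM μ (i - a) := by
        apply Finset.sum_congr rfl
        intro i _
        rw [show μ + ν = ν + μ by ring]
        exact pois_conv ν μ i
    _ = ∑ a ∈ range j, poisM ν a * ∑ b ∈ range (j - a), poisM μ b := head_conv _ _ j

lemma swap_sum (f g : ℕ → ℝ) (j : ℕ) :
    ∑ a ∈ range j, f a * ∑ b ∈ range (j - a), g b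
      = ∑ a ∈ range j, g a * ∑ b ∈ range (j - a), f b := by
  rw [← head_conv, ← head_conv]
  exact Finset.sum_congr rfl fun i _ => conv_comm f g i


lemma exp_neg_le {p : ℝ} (hp0 : 0 ≤ p) (hp1 : p < 1) : Real.exp (-(p / (1 - p))) ≤ 1 - p := by
  have hq : 0 < 1 - p := by linarith
  have h1 : Real.log (1 / (1 - p)) ≤ 1 / (1 - p) - 1 :=
    Real.log_le_sub_one_of_pos (by positivity)
  rw [Real.log_div one_ne_zero hq.ne', Real.log_one] at h1
  have h2 : 1 / (1 - p) - 1 = p / (1 - p) := by field_simp; ring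
  have h3 : -(p / (1 - p)) ≤ Real.log (1 - p) := by linarith [h1, h2 ▸ h1]
  calc Real.exp (-(p / (1 - p))) ≤ Real.exp (Real.log (1 - p)) := Real.exp_le_exp.mpr h3
    _ = 1 - p := Real.exp_log hq

lemma HP_le_bern {p : ℝ} (hp0 : 0 ≤ p) (hp1 : p < 1) (m : ℕ) (hm : 1 ≤ m) :
    HP (p / (1 - p)) m ≤ if m = 1 then 1 - p else 1 := by
  have hq : 0 < 1 - p := by linarith
  have hlam : 0 ≤ p / (1 - p) := by positivity
  rcases eq_or_ne m 1 with rfl | h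
  · simp only [if_pos rfl]
    have : HP (p / (1 - p)) 1 = Real.exp (-(p / (1 - p))) := by
      simp [HP, poisM]
    rw [this]
    exact exp_neg_le hp0 hp1
  · rw [if_neg h]
    exact HP_le_one hlam m

lemma HP_le_HB {p : ℝ} (hp0 : 0 ≤ p) (hp1 : p < 1) (k : ℕ) :
    ∀ j, HP ((k : ℝ) * (p / (1 - p))) j ≤ HB p k j := by
  have hq : 0 < 1 - p := by linarith
  have hlam : 0 ≤ p / (1 - p) := by positivity
  induction k with
  | zero =>
    intro j
    cases j with
    | zero => simp [HP, HB]
    | succ n =>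
      have hHB : HB p 0 (n + 1) = 1 := by
        unfold HB
        rw [Finset.sum_eq_single 0]
        · simp [binM]
        · intro i _ hi
          rcases Nat.exists_eq_succ_of_ne_zero hi with ⟨m, rfl⟩
          simp [binM, Nat.choose]
        · simp
      rw [hHB]
      simpa using HP_le_one (by positivity) (n + 1)
  | succ k ih =>
    intro j
    have h1 : ((k + 1 : ℕ) : ℝ) * (p / (1 - p)) = (k : ℝ) * (p / (1 - p)) + p / (1 - p) := by
      push_cast; ring
    rw [h1, HP_add]
    calc ∑ a ∈ range j, poisM (p / (1 - p)) a * HP ((k : ℝ) * (p / (1 - p))) (j - a)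
        ≤ ∑ a ∈ range j, poisM (p / (1 - p)) a * HB p k (j - a) := by
          apply Finset.sum_le_sum
          intro a _
          exact mul_le_mul_of_nonneg_left (ih _) (poisM_nonneg hlam a)
      _ = ∑ a ∈ range j, binM p k a * HP (p / (1 - p)) (j - a) := by
          have := swap_sum (poisM (p / (1 - p))) (binM p k) j
          simpa [HB, HP] using this
      _ ≤ ∑ a ∈ range j, binM p k a * (if j - a = 1 then 1 - p else 1) := by
          apply Finset.sum_le_sum
          intro a ha
          simp only [Finset.mem_range] at ha
          exact mul_le_mul_of_nonneg_left (HP_le_bern hp0 hp1 (j - a) (by omega))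
            (binM_nonneg hp0 hp1.le k a)
      _ = (1 - p) * HB p k j + p * HB p k (j - 1) := by
          cases j with
          | zero => simp [HB]
          | succ n =>
            have hc : ∀ a ∈ range (n + 1),
                binM p k a * (if n + 1 - a = 1 then 1 - p else 1)
                  = binM p k a - (if a = n then p * binM p k a else 0) := by
              intro a ha
              simp only [Finset.mem_range] at ha
              rcases eq_or_ne a n with rfl | h
              · simp only [Nat.add_sub_cancel_left]
                simp
                ring
              · have h1 : n + 1 - a ≠ 1 := by omega
                simp [h1, h]
            rw [Finset.sum_congr rfl hc, Finset.sum_sub_distrib,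
              Finset.sum_ite_eq' (range (n + 1)) n (fun a => p * binM p k a)]
            simp only [Finset.mem_range, Nat.lt_succ_self, if_pos, Nat.add_sub_cancel]
            unfold HB
            rw [Finset.sum_range_succ (f := binM p k) (n := n)]
            ring
      _ = HB p (k + 1) j := (HB_succ p k j).symm


lemma poisM_summable (μ : ℝ) : Summable (poisM μ) := by
  have h : poisM μ = fun i => Real.exp (-μ) * (μ ^ i / (Nat.factorial i : ℝ)) := by
    funext i; unfold poisM; ring
  rw [h]
  exact (Real.summable_pow_div_factorial μ).mul_left _

lemma poisM_tsum (μ : ℝ) : ∑' i, poisM μ i = 1 := by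
  have h1 : ∑' i : ℕ, μ ^ i / (Nat.factorial i : ℝ) = Real.exp μ := by
    rw [Real.exp_eq_exp_ℝ, NormedSpace.exp_eq_tsum_div]
  calc ∑' i, poisM μ i = ∑' i, Real.exp (-μ) * (μ ^ i / (Nat.factorial i : ℝ)) := by
        apply tsum_congr; intro i; unfold poisM; ring
    _ = Real.exp (-μ) * Real.exp μ := by rw [tsum_mul_left, h1]
    _ = 1 := by rw [← Real.exp_add]; simp

lemma pois_tail (μ : ℝ) (j : ℕ) :
    ∑' i : {i : ℕ // j ≤ i}, poisM μ (i : ℕ) = 1 - HP μ j := by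
  have hs := poisM_summable μ
  have h := Summable.sum_add_tsum_subtype_compl hs (Finset.range j)
  rw [poisM_tsum] at h
  have he := (Equiv.subtypeEquivRight
      (fun x : ℕ => by simp [Finset.mem_range, not_lt] :
        ∀ x : ℕ, x ∉ Finset.range j ↔ j ≤ x)).tsum_eq
      (fun i : {i : ℕ // j ≤ i} => poisM μ (i : ℕ))
  simp only [Equiv.subtypeEquivRight_apply] at he
  unfold HP
  rw [← he]
  linarith [h]

end BPD

/-- For every k ∈ ℕ and p ∈ [0,1), the binomial distribution Bin(k,p) is stochastically
dominated by the Poisson distribution Pois(k·p/(1−p)): for every j ∈ ℕ,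
P(Bin(k,p) ≥ j) ≤ P(Pois(k·p/(1−p)) ≥ j), written out with explicit mass functions. -/
theorem binomial_stochastically_dominated_by_poisson
    (k : ℕ) (p : ℝ) (hp0 : 0 ≤ p) (hp1 : p < 1) (j : ℕ) :
    ∑ i ∈ Finset.Icc j k, (k.choose i : ℝ) * p ^ i * (1 - p) ^ (k - i) ≤
      ∑' i : {i : ℕ // j ≤ i},
        Real.exp (-(k * p / (1 - p))) * (k * p / (1 - p)) ^ (i : ℕ) /
          (Nat.factorial i : ℝ) := by
  have hq : 0 < 1 - p := by linarith
  set μ : ℝ := (k : ℝ) * p / (1 - p) with hμdef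
  have hμ : μ = (k : ℝ) * (p / (1 - p)) := by rw [hμdef]; ring
  have hmain : BPD.HP μ j ≤ BPD.HB p k j := by
    rw [hμ]; exact BPD.HP_le_HB hp0 hp1 k j
  have htail : (∑' i : {i : ℕ // j ≤ i},
      Real.exp (-μ) * μ ^ (i : ℕ) / (Nat.factorial i : ℝ)) = 1 - BPD.HP μ j :=
    BPD.pois_tail μ j
  rw [htail]
  have hLHS : ∑ i ∈ Finset.Icc j k, (k.choose i : ℝ) * p ^ i * (1 - p) ^ (k - i)
      = ∑ i ∈ Finset.Icc j k, BPD.binM p k i := rfl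
  have htot : ∑ i ∈ Finset.range (k + 1), BPD.binM p k i = 1 := by
    calc ∑ i ∈ Finset.range (k + 1), BPD.binM p k i
        = ∑ i ∈ Finset.range (k + 1), p ^ i * (1 - p) ^ (k - i) * (k.choose i : ℝ) := by
          apply Finset.sum_congr rfl
          intro i _
          unfold BPD.binM
          ring
      _ = (p + (1 - p)) ^ k := (add_pow p (1 - p) k).symm
      _ = 1 := by norm_num
  rcases le_or_gt j (k + 1) with hj | hj
  · have hsplit : BPD.HB p k j + ∑ i ∈ Finset.Icc j k, BPD.binM p k i
        = ∑ i ∈ Finset.range (k + 1), BPD.binM p k i := by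
      unfold BPD.HB
      rw [Finset.range_eq_Ico, Finset.range_eq_Ico, ← Finset.Ico_add_one_right_eq_Icc j k]
      exact Finset.sum_Ico_consecutive (BPD.binM p k) (Nat.zero_le j) hj
    rw [htot] at hsplit
    rw [hLHS]
    linarith [hmain, hsplit]
  · have hempty : Finset.Icc j k = ∅ := Finset.Icc_eq_empty (by omega)
    rw [hempty]
    simp only [Finset.sum_empty]
    have hμpos : 0 ≤ μ := by rw [hμ]; positivity
    linarith [BPD.HP_le_one hμpos j]
end

section
/- Set a := 8m/(m−1). For every n ∈ ℕ and every integer r ≥ 1, P( W_n > 5·a·d·r ) ≤ e^{−(log 3 − 1) r} + e^{−2r/3}. -/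
open MeasureTheory ProbabilityTheory Real
open scoped ENNReal NNReal

namespace GWProof

variable {Ω : Type*} [MeasurableSpace Ω]

/-- σ-algebra generated by a collection of the field variables. -/
def famSA (ξ : ℕ → ℕ → Ω → ℕ) (S : Set (ℕ × ℕ)) : MeasurableSpace Ω :=
  ⨆ p ∈ S, MeasurableSpace.comap (ξ p.1 p.2) inferInstance

lemma famSA_le {ξ : ℕ → ℕ → Ω → ℕ} (hmeas : ∀ n i, Measurable (ξ n i)) (S : Set (ℕ × ℕ)) :
    famSA ξ S ≤ ‹MeasurableSpace Ω› :=
  iSup₂_le fun p _ => measurable_iff_comap_le.mp (hmeas p.1 p.2)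

lemma famSA_mono {ξ : ℕ → ℕ → Ω → ℕ} {S T : Set (ℕ × ℕ)} (h : S ⊆ T) :
    famSA ξ S ≤ famSA ξ T :=
  biSup_mono h

lemma meas_xi_famSA {ξ : ℕ → ℕ → Ω → ℕ} {S : Set (ℕ × ℕ)} {p : ℕ × ℕ} (hp : p ∈ S) :
    Measurable[famSA ξ S] (ξ p.1 p.2) :=
  Measurable.of_comap_le
    (le_iSup₂ (f := fun (p : ℕ × ℕ) (_ : p ∈ S) =>
      MeasurableSpace.comap (ξ p.1 p.2) inferInstance) p hp)

lemma indep_famSA {P : Measure Ω} {ξ : ℕ → ℕ → Ω → ℕ}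
    (hmeas : ∀ n i, Measurable (ξ n i))
    (hindep : iIndepFun (fun p : ℕ × ℕ => ξ p.1 p.2) P)
    {S T : Set (ℕ × ℕ)} (hST : Disjoint S T) :
    Indep (famSA ξ S) (famSA ξ T) P := by
  have h := indep_iSup_of_disjoint (m := fun p : ℕ × ℕ =>
      MeasurableSpace.comap (ξ p.1 p.2) inferInstance)
    (fun p => measurable_iff_comap_le.mp (hmeas p.1 p.2)) hindep.iIndep hST
  exact h

end GWProof

namespace GWProof

set_option linter.unusedSectionVars false

variable {Ω : Type*} [MeasurableSpace Ω]

lemma Z_meas {ξ : ℕ → ℕ → Ω → ℕ} {Z : ℕ → Ω → ℕ}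
    (hmeas : ∀ n i, Measurable (ξ n i))
    (hZ0 : ∀ ω, Z 0 ω = 1)
    (hZsucc : ∀ n ω, Z (n + 1) ω = ∑ i ∈ Finset.range (Z n ω), ξ n i ω) :
    ∀ n, Measurable[famSA ξ {p | p.1 < n}] (Z n) := by
  intro n
  induction n with
  | zero =>
      have h : Z 0 = fun _ => 1 := funext hZ0
      rw [h]; exact measurable_const
  | succ n ih =>
      refine @measurable_to_countable' ℕ Ω _ _ (famSA ξ {p | p.1 < n + 1})
        (Z (n + 1)) fun j => ?_
      have h : Z (n + 1) ⁻¹' {j} =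
          ⋃ k : ℕ, (Z n ⁻¹' {k}) ∩ ((fun ω => ∑ i ∈ Finset.range k, ξ n i ω) ⁻¹' {j}) := by
        ext ω
        simp only [Set.mem_preimage, Set.mem_singleton_iff, Set.mem_iUnion, Set.mem_inter_iff]
        constructor
        · intro h; exact ⟨Z n ω, rfl, by rw [← hZsucc n ω]; exact h⟩
        · rintro ⟨k, hk, hsum⟩; rw [hZsucc n ω, hk]; exact hsum
      rw [h]
      refine MeasurableSet.iUnion fun k => MeasurableSet.inter ?_ ?_
      · exact (ih.mono (famSA_mono fun p hp => lt_trans hp (Nat.lt_succ_self n)) le_rfl)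
          (measurableSet_singleton k)
      · refine (Finset.measurable_sum (Finset.range k) fun i _ => ?_) (measurableSet_singleton j)
        exact meas_xi_famSA (S := {p | p.1 < n + 1}) (p := (n, i)) (Nat.lt_succ_self n)

lemma g_meas (l : ℝ) : Measurable fun x : ℕ => ENNReal.ofReal (Real.exp (l * (x : ℝ))) :=
  measurable_from_top

lemma row_prod {P : Measure Ω} [IsProbabilityMeasure P] {ξ : ℕ → ℕ → Ω → ℕ}
    {μ : Measure ℕ}
    (hmeas : ∀ n i, Measurable (ξ n i))
    (hlaw : ∀ n i, MeasureTheory.Measure.map (ξ n i) P = μ)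
    (hindep : iIndepFun (fun p : ℕ × ℕ => ξ p.1 p.2) P)
    (l : ℝ) (n : ℕ) :
    ∀ k : ℕ, ∫⁻ ω, ∏ i ∈ Finset.range k, ENNReal.ofReal (Real.exp (l * (ξ n i ω : ℝ))) ∂P
      = (∫⁻ x : ℕ, ENNReal.ofReal (Real.exp (l * (x : ℝ))) ∂μ) ^ k := by
  intro k
  induction k with
  | zero => simp
  | succ k ih =>
      have hsingle : ∫⁻ ω, ENNReal.ofReal (Real.exp (l * (ξ n k ω : ℝ))) ∂P
          = ∫⁻ x : ℕ, ENNReal.ofReal (Real.exp (l * (x : ℝ))) ∂μ := by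
        rw [← hlaw n k, lintegral_map (g_meas l) (hmeas n k)]
      have hsplit : (fun ω => ∏ i ∈ Finset.range (k + 1),
            ENNReal.ofReal (Real.exp (l * (ξ n i ω : ℝ))))
          = fun ω => (∏ i ∈ Finset.range k, ENNReal.ofReal (Real.exp (l * (ξ n i ω : ℝ)))) *
              ENNReal.ofReal (Real.exp (l * (ξ n k ω : ℝ))) := by
        funext ω; exact Finset.prod_range_succ _ _
      have hdisj : Disjoint {p : ℕ × ℕ | p.1 = n ∧ p.2 < k} {(n, k)} := by
        rw [Set.disjoint_left]
        rintro p ⟨h1, h2⟩ hp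
        rw [Set.mem_singleton_iff] at hp
        subst hp
        exact lt_irrefl k h2
      have hf : Measurable[famSA ξ {p : ℕ × ℕ | p.1 = n ∧ p.2 < k}]
          fun ω => ∏ i ∈ Finset.range k, ENNReal.ofReal (Real.exp (l * (ξ n i ω : ℝ))) := by
        refine Finset.measurable_prod _ fun i hi => ?_
        exact (g_meas l).comp
          (meas_xi_famSA (S := {p : ℕ × ℕ | p.1 = n ∧ p.2 < k}) (p := (n, i))
            ⟨rfl, Finset.mem_range.mp hi⟩)
      have hg : Measurable[famSA ξ ({(n, k)} : Set (ℕ × ℕ))]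
          fun ω => ENNReal.ofReal (Real.exp (l * (ξ n k ω : ℝ))) :=
        (g_meas l).comp (meas_xi_famSA (S := ({(n, k)} : Set (ℕ × ℕ))) (p := (n, k)) rfl)
      rw [hsplit,
        lintegral_mul_eq_lintegral_mul_lintegral_of_independent_measurableSpace
          (famSA_le hmeas _) (famSA_le hmeas _) (indep_famSA hmeas hindep hdisj) hf hg,
        ih, hsingle, pow_succ]

lemma lintegral_comp_count {T : Ω → ℕ} (hT : Measurable T)
    {P : Measure Ω} (F : ℕ → ℝ≥0∞) :
    ∫⁻ ω, F (T ω) ∂P = ∑' k : ℕ, P (T ⁻¹' {k}) * F k := by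
  rw [← lintegral_map measurable_from_top hT, lintegral_countable' _]
  congr 1
  funext k
  rw [Measure.map_apply hT (measurableSet_singleton k), mul_comm]

end GWProof

namespace GWProof

set_option linter.unusedSectionVars false

variable {Ω : Type*} [MeasurableSpace Ω]

lemma step_eq {P : Measure Ω} [IsProbabilityMeasure P] {ξ : ℕ → ℕ → Ω → ℕ}
    {μ : Measure ℕ} {Z : ℕ → Ω → ℕ}
    (hmeas : ∀ n i, Measurable (ξ n i))
    (hlaw : ∀ n i, MeasureTheory.Measure.map (ξ n i) P = μ)
    (hindep : iIndepFun (fun p : ℕ × ℕ => ξ p.1 p.2) P)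
    (hZ0 : ∀ ω, Z 0 ω = 1)
    (hZsucc : ∀ n ω, Z (n + 1) ω = ∑ i ∈ Finset.range (Z n ω), ξ n i ω)
    (l : ℝ) (n : ℕ) :
    ∫⁻ ω, ENNReal.ofReal (Real.exp (l * (Z (n + 1) ω : ℝ))) ∂P
      = ∑' k : ℕ, P (Z n ⁻¹' {k}) *
          (∫⁻ x : ℕ, ENNReal.ofReal (Real.exp (l * (x : ℝ))) ∂μ) ^ k := by
  have hZn : Measurable (Z n) := (Z_meas hmeas hZ0 hZsucc n).mono (famSA_le hmeas _) le_rfl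
  have hsk : ∀ k : ℕ, MeasurableSet (Z n ⁻¹' {k}) := fun k => hZn (measurableSet_singleton k)
  have hdis : Pairwise (Function.onFun Disjoint fun k : ℕ => Z n ⁻¹' {k}) := by
    intro i j hij
    exact Set.disjoint_left.mpr fun ω hi hj => hij (by
      simp only [Set.mem_preimage, Set.mem_singleton_iff] at hi hj
      rw [← hi, ← hj])
  have huniv : (⋃ k : ℕ, Z n ⁻¹' {k}) = Set.univ := by
    ext ω; simp
  calc ∫⁻ ω, ENNReal.ofReal (Real.exp (l * (Z (n + 1) ω : ℝ))) ∂P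
      = ∫⁻ ω in ⋃ k : ℕ, Z n ⁻¹' {k}, ENNReal.ofReal (Real.exp (l * (Z (n + 1) ω : ℝ))) ∂P := by
        rw [huniv, setLIntegral_univ]
    _ = ∑' k : ℕ, ∫⁻ ω in Z n ⁻¹' {k},
          ENNReal.ofReal (Real.exp (l * (Z (n + 1) ω : ℝ))) ∂P := lintegral_iUnion hsk hdis _
    _ = ∑' k : ℕ, P (Z n ⁻¹' {k}) *
          (∫⁻ x : ℕ, ENNReal.ofReal (Real.exp (l * (x : ℝ))) ∂μ) ^ k := by
        congr 1
        funext k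
        have hcg : ∀ ω ∈ Z n ⁻¹' {k}, ENNReal.ofReal (Real.exp (l * (Z (n + 1) ω : ℝ)))
            = ∏ i ∈ Finset.range k, ENNReal.ofReal (Real.exp (l * (ξ n i ω : ℝ))) := by
          intro ω hω
          have hk : Z n ω = k := hω
          rw [hZsucc n ω, hk, Nat.cast_sum, Finset.mul_sum, Real.exp_sum,
            ENNReal.ofReal_prod_of_nonneg (fun i _ => (Real.exp_pos _).le)]
        rw [setLIntegral_congr_fun (hsk k) hcg]
        -- now pull the set out via independence
        have hind : ∫⁻ ω in Z n ⁻¹' {k},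
            (∏ i ∈ Finset.range k, ENNReal.ofReal (Real.exp (l * (ξ n i ω : ℝ)))) ∂P
            = P (Z n ⁻¹' {k}) *
              ∫⁻ ω, ∏ i ∈ Finset.range k, ENNReal.ofReal (Real.exp (l * (ξ n i ω : ℝ))) ∂P := by
          have hAmeas : MeasurableSet[famSA ξ {p : ℕ × ℕ | p.1 < n}] (Z n ⁻¹' {k}) :=
            Z_meas hmeas hZ0 hZsucc n (measurableSet_singleton k)
          have hindic : Measurable[famSA ξ {p : ℕ × ℕ | p.1 < n}]
              ((Z n ⁻¹' {k}).indicator fun _ => (1 : ℝ≥0∞)) :=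
            measurable_const.indicator hAmeas
          have hprodmeas : Measurable[famSA ξ {p : ℕ × ℕ | p.1 = n}]
              fun ω => ∏ i ∈ Finset.range k, ENNReal.ofReal (Real.exp (l * (ξ n i ω : ℝ))) := by
            refine Finset.measurable_prod _ fun i _ => ?_
            exact (g_meas l).comp (meas_xi_famSA (S := {p : ℕ × ℕ | p.1 = n}) (p := (n, i)) rfl)
          have hdisj : Disjoint {p : ℕ × ℕ | p.1 < n} {p : ℕ × ℕ | p.1 = n} := by
            rw [Set.disjoint_left]
            intro p h1 h2
            exact absurd h2 (Nat.ne_of_lt h1)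
          have hmul := lintegral_mul_eq_lintegral_mul_lintegral_of_independent_measurableSpace
            (famSA_le hmeas _) (famSA_le hmeas _) (indep_famSA hmeas hindep hdisj)
            hindic hprodmeas
          have hrewrite : ∀ ω, ((Z n ⁻¹' {k}).indicator (fun _ => (1 : ℝ≥0∞)) ω) *
              (∏ i ∈ Finset.range k, ENNReal.ofReal (Real.exp (l * (ξ n i ω : ℝ))))
              = (Z n ⁻¹' {k}).indicator
                  (fun ω => ∏ i ∈ Finset.range k, ENNReal.ofReal (Real.exp (l * (ξ n i ω : ℝ)))) ω := by
            intro ω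
            by_cases hω : ω ∈ Z n ⁻¹' {k} <;> simp [Set.indicator, hω]
          rw [← lintegral_indicator (hZn (measurableSet_singleton k))]
          simp_rw [← hrewrite]
          rw [hmul]
          congr 1
          rw [lintegral_indicator (hZn (measurableSet_singleton k))]
          simp
        rw [hind, row_prod hmeas hlaw hindep l n k]

lemma mgf_mu (d : ℕ) (m : ℝ) (hm : 1 < m)
    (μ : Measure ℕ) [IsProbabilityMeasure μ]
    (hsupp : ∀ k : ℕ, d < k → μ {k} = 0)
    (hmean : ∑' k : ℕ, (k : ℝ) * (μ {k}).toReal = m)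
    {l : ℝ} (hl0 : 0 ≤ l) (hld : l * d ≤ 1) :
    ∫⁻ x : ℕ, ENNReal.ofReal (Real.exp (l * (x : ℝ))) ∂μ
      ≤ ENNReal.ofReal (Real.exp (l * m * (1 + l * d))) := by
  have hd0 : (0 : ℝ) ≤ d := Nat.cast_nonneg d
  have hfin : ∀ k : ℕ, μ {k} ≠ ⊤ := fun k => measure_ne_top μ _
  have hp0 : ∀ k : ℕ, 0 ≤ (μ {k}).toReal := fun k => ENNReal.toReal_nonneg
  rw [lintegral_countable' _]
  have hvanish : ∀ k ∉ Finset.range (d + 1),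
      ENNReal.ofReal (Real.exp (l * (k : ℝ))) * μ {k} = 0 := by
    intro k hk
    have hdk : d < k := Nat.lt_of_succ_le (Nat.not_lt.mp
      (fun h => hk (Finset.mem_range.mpr h)))
    rw [hsupp k hdk]
    simp
  rw [tsum_eq_sum hvanish]
  have hofsum : ∑ k ∈ Finset.range (d + 1), ENNReal.ofReal (Real.exp (l * (k : ℝ))) * μ {k}
      = ENNReal.ofReal (∑ k ∈ Finset.range (d + 1),
          Real.exp (l * (k : ℝ)) * (μ {k}).toReal) := by
    rw [ENNReal.ofReal_sum_of_nonneg (fun i _ => mul_nonneg (Real.exp_pos _).le (hp0 i))]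
    refine Finset.sum_congr rfl fun k _ => ?_
    rw [ENNReal.ofReal_mul (Real.exp_pos _).le, ENNReal.ofReal_toReal (hfin k)]
  rw [hofsum]
  apply ENNReal.ofReal_le_ofReal
  -- total mass
  have htot : ∑' k : ℕ, μ {k} = 1 := by
    have huniv : (⋃ k : ℕ, ({k} : Set ℕ)) = Set.univ := by ext x; simp
    have := measure_iUnion (μ := μ) (fun i j hij => by
        simp only [Function.onFun]
        exact Set.disjoint_singleton.mpr hij)
      (fun k : ℕ => measurableSet_singleton k)
    rw [huniv, measure_univ] at this
    exact this.symm
  have hsum1 : ∑ k ∈ Finset.range (d + 1), (μ {k}).toReal = 1 := by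
    have h1 : ∑' k : ℕ, μ {k} = ∑ k ∈ Finset.range (d + 1), μ {k} :=
      tsum_eq_sum fun k hk => hsupp k (Nat.lt_of_succ_le (Nat.not_lt.mp
        (fun h => hk (Finset.mem_range.mpr h))))
    have h2 : (∑ k ∈ Finset.range (d + 1), μ {k}).toReal
        = ∑ k ∈ Finset.range (d + 1), (μ {k}).toReal :=
      ENNReal.toReal_sum fun k _ => hfin k
    rw [← h2, ← h1, htot]
    simp
  have hsummean : ∑ k ∈ Finset.range (d + 1), (k : ℝ) * (μ {k}).toReal = m := by
    rw [← hmean]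
    refine (tsum_eq_sum fun k hk => ?_).symm
    have : μ {k} = 0 := hsupp k (Nat.lt_of_succ_le (Nat.not_lt.mp
      (fun h => hk (Finset.mem_range.mpr h))))
    rw [this]
    simp
  have hexpquad : ∀ t : ℝ, 0 ≤ t → t ≤ 1 → Real.exp t ≤ 1 + t + t ^ 2 := by
    intro t h0 h1
    have hb := Real.exp_bound (x := t) (by rwa [abs_of_nonneg h0]) (n := 2) (by norm_num)
    rw [abs_of_nonneg h0] at hb
    simp only [Finset.sum_range_succ, Finset.sum_range_zero] at hb
    norm_num at hb
    have hb2 := abs_le.mp hb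
    nlinarith [sq_nonneg t, hb2.1, hb2.2]
  have hm0 : 0 ≤ m := by linarith
  calc ∑ k ∈ Finset.range (d + 1), Real.exp (l * (k : ℝ)) * (μ {k}).toReal
      ≤ ∑ k ∈ Finset.range (d + 1),
          ((μ {k}).toReal + l * ((k : ℝ) * (μ {k}).toReal)
            + (l * d * l) * ((k : ℝ) * (μ {k}).toReal)) := by
        refine Finset.sum_le_sum fun k hk => ?_
        have hkd : (k : ℝ) ≤ d := by
          have := Nat.lt_succ_iff.mp (Finset.mem_range.mp hk)
          exact_mod_cast this
        have h0k : 0 ≤ l * (k : ℝ) := mul_nonneg hl0 (Nat.cast_nonneg k)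
        have hlk : l * (k : ℝ) ≤ 1 := le_trans (by nlinarith) hld
        have hq := hexpquad (l * (k : ℝ)) h0k hlk
        have hlkd : l * (k : ℝ) ≤ l * d := mul_le_mul_of_nonneg_left hkd hl0
        have hkk : (l * (k : ℝ)) ^ 2 ≤ (l * d) * (l * (k : ℝ)) := by
          nlinarith [mul_nonneg h0k (sub_nonneg.mpr hlkd)]
        have : Real.exp (l * (k : ℝ)) ≤ 1 + l * (k : ℝ) + (l * d) * (l * (k : ℝ)) := by
          linarith
        nlinarith [hp0 k, this]
    _ = 1 + l * m + (l * d * l) * m := by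
        rw [Finset.sum_add_distrib, Finset.sum_add_distrib, ← Finset.mul_sum, ← Finset.mul_sum,
          hsum1, hsummean]
    _ ≤ Real.exp (l * m * (1 + l * d)) := by
        have := Real.add_one_le_exp (l * m * (1 + l * d))
        nlinarith

end GWProof

namespace GWProof

lemma allow_real {m d Θ M l : ℝ} (hm : 1 < m) (hd : 2 ≤ d) (hM1 : 1 ≤ M)
    (hΘ : 0 < Θ) (h4 : 4 * Θ * d ≤ m - 1) (hl0 : 0 ≤ l)
    (hl : l ≤ Θ * (1 + M⁻¹) / M) :
    l * m * (1 + l * d) ≤ Θ * (1 + (M / m)⁻¹) / (M / m) := by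
  have hmpos : (0:ℝ) < m := by linarith
  have hMpos : (0:ℝ) < M := by linarith
  have hxpos : 0 < M⁻¹ := inv_pos.mpr hMpos
  set x : ℝ := M⁻¹ with hxdef
  have hMx : M * x = 1 := mul_inv_cancel₀ hMpos.ne'
  have hx1 : x ≤ 1 := by nlinarith [mul_nonneg (sub_nonneg.mpr hM1) hxpos.le]
  have hd0 : (0:ℝ) < d := by linarith
  have hrhs : Θ * (1 + (M / m)⁻¹) / (M / m) = Θ * (1 + m * x) * (m * x) := by
    rw [hxdef]
    field_simp
  have hlhs' : Θ * (1 + M⁻¹) / M = Θ * (1 + x) * x := by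
    rw [hxdef]
    field_simp
  rw [hrhs]
  rw [hlhs'] at hl
  have hlm0 : (0:ℝ) ≤ Θ * (1 + x) * x := by positivity
  have h1 : l * m * (1 + l * d) ≤ (Θ * (1 + x) * x) * m * (1 + (Θ * (1 + x) * x) * d) := by
    have h2 : 1 + l * d ≤ 1 + (Θ * (1 + x) * x) * d := by nlinarith
    have h3 : l * m ≤ (Θ * (1 + x) * x) * m := by nlinarith
    have h4' : (0:ℝ) ≤ 1 + l * d := by positivity
    nlinarith [mul_le_mul h3 h2 h4' (by positivity : (0:ℝ) ≤ (Θ * (1 + x) * x) * m)]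
  refine h1.trans ?_
  have hlmd : (Θ * (1 + x) * x) * d ≤ 2 * Θ * d * x := by
    nlinarith [mul_nonneg (mul_nonneg (mul_nonneg hΘ.le hd0.le) hxpos.le)
      (sub_nonneg.mpr hx1)]
  have hpoly : (1 + x) * (1 + (Θ * (1 + x) * x) * d) ≤ 1 + m * x := by
    have h5 : ((Θ * (1 + x) * x) * d) * (1 + x) ≤ 4 * Θ * d * x := by
      nlinarith [mul_nonneg (sub_nonneg.mpr hlmd) (by linarith : (0:ℝ) ≤ 1 + x),
        mul_nonneg (mul_nonneg (mul_nonneg hΘ.le hd0.le) hxpos.le) (sub_nonneg.mpr hx1)]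
    have h6 : 4 * Θ * d * x ≤ (m - 1) * x := by
      nlinarith [mul_nonneg (sub_nonneg.mpr h4) hxpos.le]
    nlinarith
  nlinarith [mul_le_mul_of_nonneg_left hpoly (by positivity : (0:ℝ) ≤ Θ * m * x)]

lemma key_real {m d Θ A M l : ℝ} (hm : 1 < m) (hd : 2 ≤ d) (hM : m ≤ M)
    (hA : A * (m - 1) = 3 * d) (hΘ : 0 < Θ) (h9 : 9 * Θ * d ≤ m - 1)
    (hl0 : 0 ≤ l) (hl : l ≤ 2 * Θ / M) (ht1 : l * d ≤ 1) :
    l * m * (1 + l * d) * (M / m) + A * (1 - (M / m)⁻¹) * (l * m * (1 + l * d) * (M / m)) ^ 2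
      ≤ l * M + A * (1 - M⁻¹) * (l * M) ^ 2 := by
  have hmpos : (0:ℝ) < m := by linarith
  have hm1 : (0:ℝ) < m - 1 := by linarith
  have hMpos : (0:ℝ) < M := by linarith
  have hd0 : (0:ℝ) < d := by linarith
  have hA0 : 0 ≤ A := by nlinarith
  have hxpos : 0 < M⁻¹ := inv_pos.mpr hMpos
  set x : ℝ := M⁻¹ with hxdef
  have hMx : M * x = 1 := mul_inv_cancel₀ hMpos.ne'
  have hmx1 : m * x ≤ 1 := by nlinarith [mul_nonneg (sub_nonneg.mpr hM) hxpos.le]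
  have hid1 : l * m * (1 + l * d) * (M / m) = (l * M) * (1 + l * d) := by
    field_simp
  have hid2 : (M / m)⁻¹ = m * x := by
    rw [hxdef]
    field_simp
  rw [hid1, hid2]
  set L := l * M with hLdef
  set t := l * d with htdef
  have hL0 : 0 ≤ L := by positivity
  have ht0 : 0 ≤ t := by positivity
  have hLΘ : L ≤ 2 * Θ := by
    rw [hLdef]
    calc l * M ≤ (2 * Θ / M) * M := mul_le_mul_of_nonneg_right hl hMpos.le
      _ = 2 * Θ := div_mul_cancel₀ _ hMpos.ne'
  have ht_eq : t = L * d * x := by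
    rw [htdef, hLdef]
    linear_combination (-(l * d)) * hMx
  have h1sq : 1 ≤ (1 + t) ^ 2 := by nlinarith
  have hbr : (1 - m * x) * (1 + t) ^ 2 - (1 - x) ≤ 3 * t - (m - 1) * x := by
    have hmono : m * x ≤ m * x * (1 + t) ^ 2 :=
      le_mul_of_one_le_right (by positivity) h1sq
    have ht2 : t ^ 2 ≤ t := by nlinarith
    have hmxt : 0 ≤ m * x * t := by positivity
    have hmxt2 : 0 ≤ m * x * t ^ 2 := by positivity
    nlinarith [ht2, hmxt, hmxt2, hmono]
  have hkey : 3 * A * d * L ≤ 2 * d := by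
    have h_1 : 9 * d ^ 2 * L ≤ 18 * d ^ 2 * Θ := by
      have := mul_le_mul_of_nonneg_left hLΘ (by positivity : (0:ℝ) ≤ 9 * d ^ 2)
      linarith
    have h_2 : 18 * d ^ 2 * Θ ≤ 2 * d * (m - 1) := by
      have := mul_le_mul_of_nonneg_left h9 (by positivity : (0:ℝ) ≤ 2 * d)
      linarith
    have h_3 : (3 * A * d * L) * (m - 1) = 9 * d ^ 2 * L := by
      linear_combination (3 * d * L) * hA
    have h_4 : (3 * A * d * L) * (m - 1) ≤ (2 * d) * (m - 1) := by linarith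
    exact le_of_mul_le_mul_right h_4 hm1
  have hAL2 : (0:ℝ) ≤ A * L ^ 2 := by positivity
  have hst : A * L ^ 2 * ((1 - m * x) * (1 + t) ^ 2 - (1 - x))
      ≤ A * L ^ 2 * (3 * t - (m - 1) * x) := mul_le_mul_of_nonneg_left hbr hAL2
  have hlast : L * t + A * L ^ 2 * (3 * t - (m - 1) * x) ≤ 0 := by
    have hfact : (0:ℝ) ≤ L ^ 2 * x * (2 * d - 3 * A * d * L) :=
      mul_nonneg (mul_nonneg (sq_nonneg L) hxpos.le) (sub_nonneg.mpr hkey)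
    have hexp : L * t + A * L ^ 2 * (3 * t - (m - 1) * x)
        = -(L ^ 2 * x * (2 * d - 3 * A * d * L)) + (3 * d - A * (m - 1)) * (L ^ 2 * x) := by
      rw [ht_eq]
      ring
    rw [hexp, hA]
    linarith [hfact]
  linarith [hst, hlast]

set_option linter.unusedSectionVars false
set_option maxHeartbeats 1000000 in
lemma mgf_Z {Ω : Type*} [MeasurableSpace Ω] (P : Measure Ω) [IsProbabilityMeasure P]
    (d : ℕ) (hd : 2 ≤ d) (m : ℝ) (hm : 1 < m)
    (μ : Measure ℕ) [IsProbabilityMeasure μ]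
    (hsupp : ∀ k : ℕ, d < k → μ {k} = 0)
    (hmean : ∑' k : ℕ, (k : ℝ) * (μ {k}).toReal = m)
    (ξ : ℕ → ℕ → Ω → ℕ)
    (hmeas : ∀ n i, Measurable (ξ n i))
    (hlaw : ∀ n i, MeasureTheory.Measure.map (ξ n i) P = μ)
    (hindep : iIndepFun (fun p : ℕ × ℕ => ξ p.1 p.2) P)
    (Z : ℕ → Ω → ℕ) (hZ0 : ∀ ω, Z 0 ω = 1)
    (hZsucc : ∀ n ω, Z (n + 1) ω = ∑ i ∈ Finset.range (Z n ω), ξ n i ω)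
    (a : ℝ) (ha : a = 8 * m / (m - 1)) :
    ∀ n : ℕ, ∀ l : ℝ, 0 ≤ l → l ≤ (Real.log 2 / (a * d)) * (1 + (m ^ n)⁻¹) / m ^ n →
      ∫⁻ ω, ENNReal.ofReal (Real.exp (l * (Z n ω : ℝ))) ∂P ≤
        ENNReal.ofReal (Real.exp (l * m ^ n +
          (3 * d / (m - 1)) * (1 - (m ^ n)⁻¹) * (l * m ^ n) ^ 2)) := by
  have hm1 : (0:ℝ) < m - 1 := by linarith
  have hmpos : (0:ℝ) < m := by linarith
  have hd2 : (2:ℝ) ≤ (d : ℝ) := by exact_mod_cast hd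
  have hd0 : (0:ℝ) < d := by linarith
  have ha8 : (8:ℝ) ≤ a := by
    rw [ha, le_div_iff₀ hm1]; nlinarith
  have hapos : (0:ℝ) < a := by linarith
  have haeq : a * (m - 1) = 8 * m := by
    rw [ha]; field_simp
  have hlog2pos : 0 < Real.log 2 := Real.log_pos (by norm_num)
  have hlog2lt : Real.log 2 < 0.6931471808 := Real.log_two_lt_d9
  set Θ : ℝ := Real.log 2 / (a * (d : ℝ)) with hΘdef
  have hΘpos : 0 < Θ := div_pos hlog2pos (by positivity)
  have hΘd : Θ * d = Real.log 2 / a := by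
    rw [hΘdef]; field_simp
  have h4 : 4 * Θ * d ≤ m - 1 := by
    have h1 : 4 * (Real.log 2 / a) ≤ m - 1 := by
      rw [show 4 * (Real.log 2 / a) = (4 * Real.log 2) / a by ring, div_le_iff₀ hapos]
      nlinarith
    linarith [hΘd]
  have h9 : 9 * Θ * d ≤ m - 1 := by
    have h1 : 9 * (Real.log 2 / a) ≤ m - 1 := by
      rw [show 9 * (Real.log 2 / a) = (9 * Real.log 2) / a by ring, div_le_iff₀ hapos]
      nlinarith
    linarith [hΘd]
  have hAeq : (3 * (d:ℝ) / (m - 1)) * (m - 1) = 3 * d := by field_simp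
  intro n
  induction n with
  | zero =>
      intro l hl0 hlup
      have hconst : (fun ω => ENNReal.ofReal (Real.exp (l * (Z 0 ω : ℝ))))
          = fun _ => ENNReal.ofReal (Real.exp (l * 1)) := by
        funext ω; rw [hZ0 ω]; norm_num
      rw [hconst, lintegral_const, measure_univ, mul_one]
      apply ENNReal.ofReal_le_ofReal
      apply Real.exp_le_exp.mpr
      simp
  | succ n ih =>
      intro l hl0 hlup
      set M : ℝ := m ^ (n + 1) with hMdef
      have hMpos : 0 < M := by positivity
      have hM1 : 1 ≤ M := one_le_pow₀ hm.le
      have hmM : m ≤ M := by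
        calc m = m ^ 1 := (pow_one m).symm
          _ ≤ m ^ (n + 1) := pow_le_pow_right₀ hm.le (Nat.le_add_left 1 n)
      have hMn : m ^ n = M / m := by
        rw [hMdef, pow_succ]
        field_simp
      have hMinv1 : M⁻¹ ≤ 1 := by
        have hMx : M * M⁻¹ = 1 := mul_inv_cancel₀ hMpos.ne'
        nlinarith [inv_pos.mpr hMpos]
      have hl2Θ : l ≤ 2 * Θ / M := by
        refine hlup.trans ?_
        have hnum : Θ * (1 + M⁻¹) ≤ 2 * Θ := by nlinarith
        exact div_le_div_of_nonneg_right hnum hMpos.le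
      have hlle : l ≤ 2 * Θ := by
        refine hl2Θ.trans ?_
        exact div_le_self (by positivity) hM1
      have hld1 : l * d ≤ 1 := by
        have h1 : l * d ≤ 2 * Θ * d := by nlinarith
        have h2 : 2 * (Real.log 2 / a) ≤ 1 := by
          rw [show 2 * (Real.log 2 / a) = (2 * Real.log 2) / a by ring, div_le_one hapos]
          nlinarith
        linarith [hΘd, h1, h2]
      -- main chain
      have hZn : Measurable (Z n) := (Z_meas hmeas hZ0 hZsucc n).mono (famSA_le hmeas _) le_rfl
      set l' : ℝ := l * m * (1 + l * d) with hl'def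
      have hl'0 : 0 ≤ l' := by positivity
      have hc := mgf_mu d m hm μ hsupp hmean hl0 hld1
      have hofpow : ∀ k : ℕ, (ENNReal.ofReal (Real.exp l')) ^ k
          = ENNReal.ofReal (Real.exp (l' * k)) := by
        intro k
        rw [← ENNReal.ofReal_pow (Real.exp_nonneg _), ← Real.exp_nat_mul, mul_comm]
      calc ∫⁻ ω, ENNReal.ofReal (Real.exp (l * (Z (n + 1) ω : ℝ))) ∂P
          = ∑' k : ℕ, P (Z n ⁻¹' {k}) *
              (∫⁻ x : ℕ, ENNReal.ofReal (Real.exp (l * (x : ℝ))) ∂μ) ^ k :=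
            step_eq hmeas hlaw hindep hZ0 hZsucc l n
        _ ≤ ∑' k : ℕ, P (Z n ⁻¹' {k}) * ENNReal.ofReal (Real.exp (l' * k)) := by
            refine ENNReal.tsum_le_tsum fun k => mul_le_mul_right ?_ _
            rw [← hofpow k]
            exact pow_le_pow_left' hc k
        _ = ∫⁻ ω, ENNReal.ofReal (Real.exp (l' * (Z n ω : ℝ))) ∂P :=
            (lintegral_comp_count hZn fun k => ENNReal.ofReal (Real.exp (l' * (k : ℝ)))).symm
        _ ≤ ENNReal.ofReal (Real.exp (l' * m ^ n +
              (3 * d / (m - 1)) * (1 - (m ^ n)⁻¹) * (l' * m ^ n) ^ 2)) := by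
            refine ih l' hl'0 ?_
            rw [hMn]
            exact allow_real hm hd2 hM1 hΘpos h4 hl0 hlup
        _ ≤ ENNReal.ofReal (Real.exp (l * M +
              (3 * d / (m - 1)) * (1 - M⁻¹) * (l * M) ^ 2)) := by
            apply ENNReal.ofReal_le_ofReal
            apply Real.exp_le_exp.mpr
            rw [hMn]
            exact key_real hm hd2 hmM hAeq hΘpos h9 hl0 hl2Θ hld1

end GWProof

set_option maxHeartbeats 1000000 in
/-- Set a := 8m/(m−1). For every n ∈ ℕ and integer r ≥ 1,
P(W_n > 5·a·d·r) ≤ e^{−(log 3 − 1)r} + e^{−2r/3}. -/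
theorem gw_tail_Wn_two_terms
    {Ω : Type*} [MeasurableSpace Ω] (P : MeasureTheory.Measure Ω)
    [MeasureTheory.IsProbabilityMeasure P]
    (d : ℕ) (hd : 2 ≤ d) (m : ℝ) (hm : 1 < m)
    (μ : MeasureTheory.Measure ℕ) [MeasureTheory.IsProbabilityMeasure μ]
    (hsupp : ∀ k : ℕ, d < k → μ {k} = 0)
    (hmean : ∑' k : ℕ, (k : ℝ) * (μ {k}).toReal = m)
    (ξ : ℕ → ℕ → Ω → ℕ)
    (hmeas : ∀ n i, Measurable (ξ n i))
    (hlaw : ∀ n i, MeasureTheory.Measure.map (ξ n i) P = μ)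
    (hindep : ProbabilityTheory.iIndepFun
      (fun p : ℕ × ℕ => ξ p.1 p.2) P)
    (Z : ℕ → Ω → ℕ) (hZ0 : ∀ ω, Z 0 ω = 1)
    (hZsucc : ∀ n ω, Z (n + 1) ω = ∑ i ∈ Finset.range (Z n ω), ξ n i ω)
    (W : ℕ → Ω → ℝ) (hW : ∀ n ω, W n ω = (Z n ω : ℝ) / m ^ n)
    (a : ℝ) (ha : a = 8 * m / (m - 1)) (n : ℕ) (r : ℕ) (hr : 1 ≤ r) :
    P {ω | 5 * a * d * r < W n ω} ≤
      ENNReal.ofReal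
        (Real.exp (-(Real.log 3 - 1) * r) + Real.exp (-2 * r / 3)) := by
  classical
  have hm1 : (0:ℝ) < m - 1 := by linarith
  have hd2 : (2:ℝ) ≤ (d:ℝ) := by exact_mod_cast hd
  have hd0 : (0:ℝ) < d := by linarith
  have ha8 : (8:ℝ) ≤ a := by rw [ha, le_div_iff₀ hm1]; nlinarith
  have hapos : (0:ℝ) < a := by linarith
  have had16 : (16:ℝ) ≤ a * d := by nlinarith
  have hadpos : (0:ℝ) < a * (d:ℝ) := by positivity
  have hlog2pos : 0 < Real.log 2 := Real.log_pos (by norm_num)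
  have hlog2lt : Real.log 2 < 0.6931471808 := Real.log_two_lt_d9
  set θ : ℝ := Real.log 2 / (a * (d:ℝ)) with hθdef
  have hθpos : 0 < θ := div_pos hlog2pos hadpos
  have hθad : θ * (a * (d:ℝ)) = Real.log 2 := by
    rw [hθdef]; field_simp
  have hMn : (0:ℝ) < m ^ n := by positivity
  have hr1 : (1:ℝ) ≤ (r:ℝ) := by exact_mod_cast hr
  set l : ℝ := θ / m ^ n with hldef
  have hl0 : 0 ≤ l := by positivity
  have hZn : Measurable (Z n) :=
    (GWProof.Z_meas hmeas hZ0 hZsucc n).mono (GWProof.famSA_le hmeas _) le_rfl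
  have hWn : Measurable (W n) := by
    have h : W n = fun ω => (Z n ω : ℝ) / m ^ n := funext (hW n)
    rw [h]
    exact (measurable_from_top.comp hZn).div_const _
  have hE : MeasurableSet {ω | 5 * a * d * r < W n ω} :=
    measurableSet_lt measurable_const hWn
  -- MGF bound
  have hmgf : ∫⁻ ω, ENNReal.ofReal (Real.exp (θ * W n ω)) ∂P
      ≤ ENNReal.ofReal (Real.exp (2 * θ)) := by
    have hEq : (fun ω => ENNReal.ofReal (Real.exp (θ * W n ω)))
        = fun ω => ENNReal.ofReal (Real.exp (l * (Z n ω : ℝ))) := by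
      funext ω
      rw [hW n ω, hldef]
      congr 2
      ring
    rw [hEq]
    have hallow : l ≤ (Real.log 2 / (a * (d:ℝ))) * (1 + (m ^ n)⁻¹) / m ^ n := by
      rw [hldef, hθdef]
      have h1 : Real.log 2 / (a * (d:ℝ))
          ≤ Real.log 2 / (a * (d:ℝ)) * (1 + (m ^ n)⁻¹) := by
        nlinarith [inv_pos.mpr hMn, div_pos hlog2pos hadpos]
      exact div_le_div_of_nonneg_right h1 hMn.le
    have h := GWProof.mgf_Z P d hd m hm μ hsupp hmean ξ hmeas hlaw hindep Z hZ0 hZsucc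
      a ha n l hl0 hallow
    refine h.trans (ENNReal.ofReal_le_ofReal (Real.exp_le_exp.mpr ?_))
    have hlmn : l * m ^ n = θ := by rw [hldef]; field_simp
    rw [hlmn]
    have hinv0 : 0 < (m ^ n)⁻¹ := inv_pos.mpr hMn
    have hinv1 : (m ^ n)⁻¹ ≤ 1 := by
      have hMx : m ^ n * (m ^ n)⁻¹ = 1 := mul_inv_cancel₀ hMn.ne'
      nlinarith [one_le_pow₀ hm.le (n := n)]
    have hA0 : (0:ℝ) ≤ 3 * d / (m - 1) := by positivity
    have hAθ : (3 * (d:ℝ) / (m - 1)) * θ ≤ 1 := by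
      have hpos : (0:ℝ) < (m - 1) * a := by positivity
      have haeq : a * (m - 1) = 8 * m := by rw [ha]; field_simp
      have e1 : (3 * (d:ℝ) / (m - 1)) * (m - 1) = 3 * d := by field_simp
      have key : ((3 * (d:ℝ) / (m - 1)) * θ) * ((m - 1) * a) = 3 * Real.log 2 := by
        calc ((3 * (d:ℝ) / (m - 1)) * θ) * ((m - 1) * a)
            = ((3 * (d:ℝ) / (m - 1)) * (m - 1)) * (θ * a) := by ring
          _ = (3 * (d:ℝ)) * (θ * a) := by rw [e1]
          _ = 3 * (θ * (a * (d:ℝ))) := by ring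
          _ = 3 * Real.log 2 := by rw [hθad]
      refine le_of_mul_le_mul_right ?_ hpos
      rw [key, one_mul]
      nlinarith [hlog2lt, hm, haeq]
    have t1 : (3 * (d:ℝ) / (m - 1)) * (1 - (m ^ n)⁻¹) * θ ^ 2
        ≤ (3 * (d:ℝ) / (m - 1)) * θ ^ 2 := by
      have : (3 * (d:ℝ) / (m - 1)) * (1 - (m ^ n)⁻¹) ≤ (3 * (d:ℝ) / (m - 1)) := by
        nlinarith
      exact mul_le_mul_of_nonneg_right this (sq_nonneg θ)
    have t2 : (3 * (d:ℝ) / (m - 1)) * θ ^ 2 ≤ θ := by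
      have h5 := mul_le_mul_of_nonneg_right hAθ hθpos.le
      have h6 : (3 * (d:ℝ) / (m - 1)) * θ * θ = (3 * (d:ℝ) / (m - 1)) * θ ^ 2 := by ring
      linarith [h6 ▸ h5]
    linarith
  -- Chernoff
  have hgWmeas : Measurable fun ω => ENNReal.ofReal (Real.exp (θ * W n ω)) :=
    ENNReal.measurable_ofReal.comp (Real.measurable_exp.comp (hWn.const_mul θ))
  have hcher : P {ω | 5 * a * d * r < W n ω}
      ≤ ENNReal.ofReal (Real.exp (2 * θ - θ * (5 * a * d * r))) := by
    have hstep1 : P {ω | 5 * a * (d:ℝ) * r < W n ω}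
        ≤ ∫⁻ ω, ENNReal.ofReal (Real.exp (θ * W n ω - θ * (5 * a * d * r))) ∂P := by
      rw [← lintegral_indicator_one hE]
      refine lintegral_mono fun ω => ?_
      by_cases hω : ω ∈ {ω | 5 * a * (d:ℝ) * r < W n ω}
      · rw [Set.indicator_of_mem hω]
        refine ENNReal.one_le_ofReal.mpr (Real.one_le_exp ?_)
        have hlt : 5 * a * (d:ℝ) * r < W n ω := hω
        nlinarith
      · rw [Set.indicator_of_notMem hω]; exact zero_le
    refine hstep1.trans ?_
    have hsplit : (fun ω => ENNReal.ofReal (Real.exp (θ * W n ω - θ * (5 * a * d * r))))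
        = fun ω => ENNReal.ofReal (Real.exp (-(θ * (5 * a * d * r))))
            * ENNReal.ofReal (Real.exp (θ * W n ω)) := by
      funext ω
      rw [← ENNReal.ofReal_mul (Real.exp_nonneg _), ← Real.exp_add]
      congr 2
      ring
    rw [hsplit, lintegral_const_mul _ hgWmeas]
    calc ENNReal.ofReal (Real.exp (-(θ * (5 * a * d * r))))
          * ∫⁻ ω, ENNReal.ofReal (Real.exp (θ * W n ω)) ∂P
        ≤ ENNReal.ofReal (Real.exp (-(θ * (5 * a * d * r))))
          * ENNReal.ofReal (Real.exp (2 * θ)) := mul_le_mul_right hmgf _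
      _ = ENNReal.ofReal (Real.exp (2 * θ - θ * (5 * a * d * r))) := by
          rw [← ENNReal.ofReal_mul (Real.exp_nonneg _), ← Real.exp_add]
          congr 2
          ring
  refine hcher.trans (ENNReal.ofReal_le_ofReal ?_)
  have hlog3 : Real.log 3 ≤ 2 * Real.log 2 := by
    calc Real.log 3 ≤ Real.log 4 := Real.log_le_log (by norm_num) (by norm_num)
      _ = 2 * Real.log 2 := by
        rw [show (4:ℝ) = 2 ^ 2 by norm_num, Real.log_pow]
        norm_num
  have hθ16 : θ * 16 ≤ Real.log 2 := by nlinarith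
  have hθt : θ * (5 * a * d * r) = 5 * Real.log 2 * r := by
    linear_combination (5 * (r:ℝ)) * hθad
  have hmain : Real.exp (2 * θ - θ * (5 * a * d * r))
      ≤ Real.exp (-(Real.log 3 - 1) * r) := by
    apply Real.exp_le_exp.mpr
    rw [hθt]
    have hp1 : Real.log 3 * r ≤ 2 * Real.log 2 * r :=
      mul_le_mul_of_nonneg_right hlog3 (by linarith)
    have hp2 : Real.log 2 ≤ Real.log 2 * r := by nlinarith
    linarith
  have hpos2 : 0 < Real.exp (-2 * (r:ℝ) / 3) := Real.exp_pos _
  linarith [hmain, hpos2]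
end
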